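/- arXiv:2601.22510 — 6 statements merged into one kernel-verified Lean document; each statement's English description precedes it below -/
import Mathlib

section
/- Let A, B, C, D be independent random variables uniformly distributed on {0,1,...,999}, and let a2 denote the tens digit of A and e1 the hundreds digit of S = A + B + C + D (writing S = e0*1000 + e1*100 + e2*10 + e3 with e0 the thousands digit). Then a2 and e1 are independent random variables. -/
set_option maxRecDepth 4000
set_option linter.constructorNameAsVariable false
open MeasureTheory ProbabilityTheory
open scoped ENNReal
attribute [local instance] Classical.propDecidable


lemma countS (t x y : ℕ) (hx : x < 10) (hy : y < 10) :
    ((Finset.range 1000).filter (fun a => a / 10 % 10 = x ∧ (a + t) / 100 % 10 = y)).card = 10 := by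
  have h := Finset.card_nbij' (s := (Finset.range 1000).filter
      (fun a => a / 10 % 10 = x ∧ (a + t) / 100 % 10 = y)) (t := Finset.range 10)
    (i := fun a => a % 10)
    (j := fun l => 100 * ((y + 10 - ((10 * x + l + t) / 100) % 10) % 10) + 10 * x + l)
    (by intro a ha; simp only [Finset.mem_coe, Finset.mem_filter, Finset.mem_range] at ha ⊢; omega)
    (by intro l hl; simp only [Finset.mem_coe, Finset.mem_filter, Finset.mem_range] at hl ⊢
        refine ⟨by omega, by omega, by omega⟩)
    (by intro a ha; simp only [Finset.mem_coe, Finset.mem_filter, Finset.mem_range] at ha; dsimp only; omega)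
    (by intro l hl; simp only [Finset.mem_coe, Finset.mem_range] at hl; dsimp only; omega)
  simpa using h

lemma countF (x : ℕ) (hx : x < 10) :
    ((Finset.range 1000).filter (fun a => a / 10 % 10 = x)).card = 100 := by
  have h := Finset.card_nbij' (s := (Finset.range 1000).filter (fun a => a / 10 % 10 = x))
    (t := Finset.range 100)
    (i := fun a => 10 * (a / 100) + a % 10)
    (j := fun m => 100 * (m / 10) + 10 * x + m % 10)
    (by intro a ha; simp only [Finset.mem_coe, Finset.mem_filter, Finset.mem_range] at ha ⊢; omega)
    (by intro m hm; simp only [Finset.mem_coe, Finset.mem_filter, Finset.mem_range] at hm ⊢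
        refine ⟨by omega, by omega⟩)
    (by intro a ha; simp only [Finset.mem_coe, Finset.mem_filter, Finset.mem_range] at ha; dsimp only; omega)
    (by intro m hm; simp only [Finset.mem_coe, Finset.mem_range] at hm; dsimp only; omega)
  simpa using h

lemma countG (t y : ℕ) (hy : y < 10) :
    ((Finset.range 1000).filter (fun a => (a + t) / 100 % 10 = y)).card = 100 := by
  have h := Finset.card_nbij' (s := (Finset.range 1000).filter (fun a => (a + t) / 100 % 10 = y))
    (t := Finset.range 100)
    (i := fun a => a % 100)
    (j := fun m => 100 * ((y + 10 - ((m + t) / 100) % 10) % 10) + m)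
    (by intro a ha; simp only [Finset.mem_coe, Finset.mem_filter, Finset.mem_range] at ha ⊢; omega)
    (by intro m hm; simp only [Finset.mem_coe, Finset.mem_filter, Finset.mem_range] at hm ⊢
        refine ⟨by omega, by omega⟩)
    (by intro a ha; simp only [Finset.mem_coe, Finset.mem_filter, Finset.mem_range] at ha; dsimp only; omega)
    (by intro m hm; simp only [Finset.mem_coe, Finset.mem_range] at hm; dsimp only; omega)
  simpa using h
lemma L1 {Ω : Type*} [MeasurableSpace Ω] (μ : Measure Ω)
    (Y : Ω → ℕ) (hY : Measurable Y)
    (hUnif : ∀ k : ℕ, k < 1000 → μ {ω | Y ω = k} = 1 / 1000)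
    (F : Finset ℕ) (hF : F ⊆ Finset.range 1000) :
    μ (Y ⁻¹' ↑F) = F.card * (1 / 1000) := by
  have hrw : Y ⁻¹' ↑F = ⋃ a ∈ F, Y ⁻¹' {a} := by ext ω; simp
  rw [hrw, measure_biUnion_finset ?disj ?meas]
  case disj =>
    rintro a - b - hab
    exact Set.disjoint_left.mpr fun ω h1 h2 => hab (h1.symm.trans h2)
  case meas => exact fun b _ => hY (Set.to_countable _).measurableSet
  have hsing : ∀ a : ℕ, Y ⁻¹' {a} = {ω | Y ω = a} := fun a => rfl
  rw [Finset.sum_congr rfl (fun a ha => by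
    rw [hsing a, hUnif a (Finset.mem_range.mp (hF ha))])]
  rw [Finset.sum_const, nsmul_eq_mul]

lemma master {Ω : Type*} [MeasurableSpace Ω] (μ : Measure Ω) [IsProbabilityMeasure μ]
    (X : Fin 4 → Ω → ℕ)
    (hIndep : iIndepFun X μ)
    (hMeas : ∀ i, Measurable (X i))
    (hVal : ∀ i ω, X i ω < 1000)
    (hUnif : ∀ i, ∀ k : ℕ, k < 1000 → μ {ω | X i ω = k} = 1 / 1000)
    (Q : ℕ → ℕ → Prop) [∀ a t, Decidable (Q a t)] (n : ℕ)
    (hn : ∀ t, ((Finset.range 1000).filter (fun a => Q a t)).card = n) :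
    μ {ω | Q (X 0 ω) (X 1 ω + X 2 ω + X 3 ω)} = n * (1 / 1000) := by
  classical
  set S : ℕ → Finset ℕ := fun t => (Finset.range 1000).filter (fun a => Q a t) with hS
  set R3 : Finset (ℕ × ℕ × ℕ) := (Finset.range 1000) ×ˢ (Finset.range 1000) ×ˢ (Finset.range 1000)
    with hR3
  set Ev : ℕ × ℕ × ℕ → Set Ω := fun p =>
    X 0 ⁻¹' ↑(S (p.1 + p.2.1 + p.2.2)) ∩ X 1 ⁻¹' {p.1} ∩ X 2 ⁻¹' {p.2.1} ∩ X 3 ⁻¹' {p.2.2}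
    with hEv
  have hmem : ∀ p ω, ω ∈ Ev p ↔ ((X 0 ω < 1000 ∧ Q (X 0 ω) (p.1 + p.2.1 + p.2.2)) ∧
      X 1 ω = p.1) ∧ X 2 ω = p.2.1 ∧ X 3 ω = p.2.2 := by
    intro p ω
    simp only [hEv, hS, Set.mem_inter_iff, Set.mem_preimage, Set.mem_singleton_iff,
      Finset.coe_filter, Finset.mem_range, Set.mem_setOf_eq, and_assoc]
  have hset : {ω | Q (X 0 ω) (X 1 ω + X 2 ω + X 3 ω)} = ⋃ p ∈ R3, Ev p := by
    ext ω
    simp only [Set.mem_setOf_eq, Set.mem_iUnion]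
    constructor
    · intro h
      refine ⟨(X 1 ω, X 2 ω, X 3 ω), ?_, ?_⟩
      · simp [hR3, Finset.mem_product, hVal 1 ω, hVal 2 ω, hVal 3 ω]
      · exact (hmem _ ω).mpr ⟨⟨⟨hVal 0 ω, h⟩, rfl⟩, rfl, rfl⟩
    · rintro ⟨⟨b, c, d⟩, -, hp⟩
      obtain ⟨⟨⟨-, h⟩, h1⟩, h2, h3⟩ := (hmem _ ω).mp hp
      rw [h1, h2, h3]; exact h
  have hdisj : Set.PairwiseDisjoint ↑R3 Ev := by
    rintro p - q - hne
    refine Set.disjoint_left.mpr fun ω h h' => hne ?_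
    obtain ⟨⟨-, h1⟩, h2, h3⟩ := (hmem _ ω).mp h
    obtain ⟨⟨-, h1'⟩, h2', h3'⟩ := (hmem _ ω).mp h'
    exact Prod.ext (h1.symm.trans h1') (Prod.ext (h2.symm.trans h2') (h3.symm.trans h3'))
  have hevmeas : ∀ p ∈ R3, MeasurableSet (Ev p) := by
    intro p _
    exact (((hMeas 0 (Set.to_countable _).measurableSet).inter
      (hMeas 1 (Set.to_countable _).measurableSet)).inter
      (hMeas 2 (Set.to_countable _).measurableSet)).inter
      (hMeas 3 (Set.to_countable _).measurableSet)
  have hterm : ∀ p ∈ R3, μ (Ev p) =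
      (n * (1 / 1000)) * ((1 / 1000) * ((1 / 1000) * (1 / 1000))) := by
    rintro ⟨b, c, d⟩ hp
    rw [hR3] at hp
    simp only [Finset.mem_product, Finset.mem_range] at hp
    obtain ⟨hb, hc, hd⟩ := hp
    have key := iIndepFun_iff_measure_inter_preimage_eq_mul.mp hIndep Finset.univ
      (sets := fun i => ![(↑(S (b + c + d)) : Set ℕ), {b}, {c}, {d}] i)
      (fun i _ => (Set.to_countable _).measurableSet)
    have hEq : Ev (b, c, d) = ⋂ i ∈ Finset.univ,
        X i ⁻¹' (![(↑(S (b + c + d)) : Set ℕ), {b}, {c}, {d}] i) := by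
      ext ω
      rw [hmem]
      simp only [Set.mem_iInter, Finset.mem_univ, forall_true_left, Fin.forall_fin_succ,
        IsEmpty.forall_iff, Matrix.cons_val_zero, Matrix.cons_val_succ, Set.mem_preimage,
        Set.mem_singleton_iff, Finset.coe_filter, Finset.mem_range, Set.mem_setOf_eq, hS]
      tauto
    rw [hEq, key, Fin.prod_univ_four]
    simp only [Matrix.cons_val_zero, Matrix.cons_val_one, Matrix.head_cons,
      Matrix.cons_val_two, Matrix.cons_val_three, Matrix.tail_cons]
    rw [L1 μ (X 0) (hMeas 0) (hUnif 0) _ (Finset.filter_subset _ _), hn]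
    have hsing : ∀ (i : Fin 4) (k : ℕ), k < 1000 → μ (X i ⁻¹' {k}) = 1 / 1000 := by
      intro i k hk
      exact hUnif i k hk
    rw [hsing 1 b hb, hsing 2 c hc, hsing 3 d hd]
    ring
  rw [hset, measure_biUnion_finset hdisj hevmeas, Finset.sum_congr rfl hterm,
    Finset.sum_const, nsmul_eq_mul]
  have hcard : R3.card = 1000 * (1000 * 1000) := by
    simp [hR3, Finset.card_product]
  rw [hcard]
  push_cast
  have h1000 : (1000 : ℝ≥0∞) * (1 / 1000) = 1 := by
    rw [one_div, ENNReal.mul_inv_cancel (by norm_num) (by norm_num)]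
  calc (1000000000 : ℝ≥0∞) * ((n * (1 / 1000)) * ((1 / 1000) * ((1 / 1000) * (1 / 1000))))
      = (n * (1 / 1000)) * ((1000 * (1 / 1000)) * ((1000 * (1 / 1000)) * (1000 * (1 / 1000)))) := by
        ring
    _ = n * (1 / 1000) := by rw [h1000]; ring
lemma decomp {Ω : Type*} [MeasurableSpace Ω] (μ : Measure Ω) (B : Set Ω) (hB : MeasurableSet B)
    (F : Ω → ℕ) (hF : Measurable F) (u : Set ℕ) :
    μ (B ∩ F ⁻¹' u) = ∑' x : ℕ, if x ∈ u then μ (B ∩ F ⁻¹' {x}) else 0 := by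
  classical
  have hrw : B ∩ F ⁻¹' u = ⋃ x : ℕ, if x ∈ u then B ∩ F ⁻¹' {x} else ∅ := by
    ext ω
    simp only [Set.mem_inter_iff, Set.mem_preimage, Set.mem_iUnion]
    constructor
    · rintro ⟨hb, hu⟩
      exact ⟨F ω, by simp [hu, hb]⟩
    · rintro ⟨x, hx⟩
      by_cases hxu : x ∈ u
      · rw [if_pos hxu] at hx
        exact ⟨hx.1, by rw [show F ω = x from hx.2]; exact hxu⟩
      · rw [if_neg hxu] at hx
        exact absurd hx (Set.notMem_empty ω)
  have hd : Pairwise (Function.onFun Disjoint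
      fun x => if x ∈ u then B ∩ F ⁻¹' {x} else ∅) := by
    intro x y hxy
    unfold Function.onFun
    dsimp only
    split_ifs with h1 h2 h2
    · refine Set.disjoint_left.mpr fun ω hω hω' => hxy ?_
      have e1 : F ω = x := hω.2
      have e2 : F ω = y := hω'.2
      rw [← e1, ← e2]
    all_goals simp
  have hm : ∀ x : ℕ, MeasurableSet (if x ∈ u then B ∩ F ⁻¹' {x} else ∅) := by
    intro x
    split_ifs
    · exact hB.inter (hF (Set.to_countable _).measurableSet)
    · exact MeasurableSet.empty
  rw [hrw, measure_iUnion hd hm]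
  exact tsum_congr fun x => by rw [apply_ite μ, measure_empty]

lemma indepFun_of_fibers {Ω : Type*} [MeasurableSpace Ω] {μ : Measure Ω} {f g : Ω → ℕ}
    (hf : Measurable f) (hg : Measurable g)
    (h : ∀ x y, μ (f ⁻¹' {x} ∩ g ⁻¹' {y}) = μ (f ⁻¹' {x}) * μ (g ⁻¹' {y})) :
    IndepFun f g μ := by
  classical
  rw [indepFun_iff_measure_inter_preimage_eq_mul]
  intro s t _ _
  have hgt : MeasurableSet (g ⁻¹' t) := hg (Set.to_countable _).measurableSet
  have hL : μ (f ⁻¹' s ∩ g ⁻¹' t)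
      = ∑' x : ℕ, if x ∈ s then
          (∑' y : ℕ, if y ∈ t then μ (f ⁻¹' {x} ∩ g ⁻¹' {y}) else 0) else 0 := by
    rw [Set.inter_comm (f ⁻¹' s), decomp μ (g ⁻¹' t) hgt f hf s]
    refine tsum_congr fun x => ?_
    split_ifs with hx
    · rw [Set.inter_comm (g ⁻¹' t), decomp μ (f ⁻¹' {x}) (hf (Set.to_countable _).measurableSet) g hg t]
    · rfl
  have hfs : μ (f ⁻¹' s) = ∑' x : ℕ, if x ∈ s then μ (f ⁻¹' {x}) else 0 := by
    have := decomp μ Set.univ MeasurableSet.univ f hf s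
    simpa using this
  have hgt' : μ (g ⁻¹' t) = ∑' y : ℕ, if y ∈ t then μ (g ⁻¹' {y}) else 0 := by
    have := decomp μ Set.univ MeasurableSet.univ g hg t
    simpa using this
  rw [hL, hfs, hgt', ← ENNReal.tsum_mul_right]
  refine tsum_congr fun x => ?_
  split_ifs with hx
  · rw [← ENNReal.tsum_mul_left]
    refine tsum_congr fun y => ?_
    split_ifs with hy
    · exact h x y
    · simp
  · simp

/-- For `A, B, C, D` independent uniform on `{0,...,999}`, the tens digit of `A`
and the hundreds digit of `S = A + B + C + D` are independent. -/
theorem tens_digit_indep_hundreds_digit_of_sum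
    {Ω : Type*} [MeasurableSpace Ω] (μ : Measure Ω) [IsProbabilityMeasure μ]
    (X : Fin 4 → Ω → ℕ)
    (hIndep : iIndepFun X μ)
    (hMeas : ∀ i, Measurable (X i))
    (hVal : ∀ i ω, X i ω < 1000)
    (hUnif : ∀ i, ∀ k : ℕ, k < 1000 → μ {ω | X i ω = k} = 1 / 1000) :
    IndepFun (fun ω => X 0 ω / 10 % 10)
      (fun ω => (X 0 ω + X 1 ω + X 2 ω + X 3 ω) / 100 % 10) μ := by
  set f : Ω → ℕ := fun ω => X 0 ω / 10 % 10 with hf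
  set g : Ω → ℕ := fun ω => (X 0 ω + X 1 ω + X 2 ω + X 3 ω) / 100 % 10 with hg
  have hfm : Measurable f :=
    Measurable.comp (g := fun n => n / 10 % 10) measurable_from_top (hMeas 0)
  have hgm : Measurable g := by
    have : Measurable fun ω => X 0 ω + X 1 ω + X 2 ω + X 3 ω :=
      (((hMeas 0).add (hMeas 1)).add (hMeas 2)).add (hMeas 3)
    exact Measurable.comp (g := fun n => n / 100 % 10) measurable_from_top this
  apply indepFun_of_fibers hfm hgm
  intro x y
  by_cases hx : x < 10
  · by_cases hy : y < 10
    · have hjoint : μ (f ⁻¹' {x} ∩ g ⁻¹' {y}) = 10 * (1 / 1000) := by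
        have hm := master μ X hIndep hMeas hVal hUnif
          (fun a t => a / 10 % 10 = x ∧ (a + t) / 100 % 10 = y) 10
          (fun t => countS t x y hx hy)
        push_cast at hm
        rw [← hm]
        congr 1
        ext ω
        simp only [Set.mem_inter_iff, Set.mem_preimage, Set.mem_singleton_iff,
          Set.mem_setOf_eq, hf, hg]
        constructor
        · rintro ⟨h1, h2⟩; exact ⟨h1, by rw [← h2]; congr 1; omega⟩
        · rintro ⟨h1, h2⟩; exact ⟨h1, by rw [← h2]; congr 1; omega⟩
      have hmf : μ (f ⁻¹' {x}) = 100 * (1 / 1000) := by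
        have hm := master μ X hIndep hMeas hVal hUnif
          (fun a t => a / 10 % 10 = x) 100 (fun t => countF x hx)
        push_cast at hm
        rw [← hm]
        rfl
      have hmg : μ (g ⁻¹' {y}) = 100 * (1 / 1000) := by
        have hm := master μ X hIndep hMeas hVal hUnif
          (fun a t => (a + t) / 100 % 10 = y) 100 (fun t => countG t y hy)
        push_cast at hm
        rw [← hm]
        congr 1
        ext ω
        simp only [Set.mem_preimage, Set.mem_singleton_iff, Set.mem_setOf_eq, hg]
        constructor
        · intro h2; rw [← h2]; congr 1; omega
        · intro h2; rw [← h2]; congr 1; omega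
      rw [hjoint, hmf, hmg]
      have k1 : (100 : ℝ≥0∞) * (1 / 1000) = 1 / 10 := by
        rw [one_div, one_div, show (1000 : ℝ≥0∞) = 100 * 10 by norm_num,
          ENNReal.mul_inv (Or.inl (by norm_num)) (Or.inl (by norm_num)), ← mul_assoc,
          ENNReal.mul_inv_cancel (by norm_num) (by norm_num), one_mul]
      have k2 : (10 : ℝ≥0∞) * (1 / 1000) = 1 / 100 := by
        rw [one_div, one_div, show (1000 : ℝ≥0∞) = 10 * 100 by norm_num,
          ENNReal.mul_inv (Or.inl (by norm_num)) (Or.inl (by norm_num)), ← mul_assoc,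
          ENNReal.mul_inv_cancel (by norm_num) (by norm_num), one_mul]
      have k3 : (1 / 10 : ℝ≥0∞) * (1 / 10) = 1 / 100 := by
        simp only [one_div]
        rw [← ENNReal.mul_inv (Or.inl (by norm_num)) (Or.inl (by norm_num))]
        norm_num
      rw [k1, k2, k3]
    · have hgy : g ⁻¹' {y} = ∅ := by
        ext ω
        simp only [Set.mem_preimage, Set.mem_singleton_iff, Set.mem_empty_iff_false,
          iff_false, hg]
        omega
      rw [hgy, Set.inter_empty, measure_empty, mul_zero]
  · have hfx : f ⁻¹' {x} = ∅ := by
      ext ω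
      simp only [Set.mem_preimage, Set.mem_singleton_iff, Set.mem_empty_iff_false,
        iff_false, hf]
      omega
    rw [hfx, Set.empty_inter, measure_empty, zero_mul]
end

section
/- Let A, B, C, D be independent random variables uniformly distributed on {0,1,...,999}, with hundreds digits a1, b1, c1, d1 respectively, and let S = A + B + C + D with thousands digit e0 = floor(S/1000). Then a1 and e0 are not independent; equivalently, the mutual information I(a1; e0) is strictly positive. -/
open MeasureTheory ProbabilityTheory Finset

set_option linter.constructorNameAsVariable false
set_option maxRecDepth 2000

/-- Mutual information of two `ℕ`-valued random variables whose values lie in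
`{0,...,nx-1}` and `{0,...,ny-1}` respectively. -/
noncomputable def mutualInfoNat {Ω : Type*} [MeasurableSpace Ω] (μ : Measure Ω)
    (X Y : Ω → ℕ) (nx ny : ℕ) : ℝ :=
  ∑ x ∈ range nx, ∑ y ∈ range ny,
    (μ {ω | X ω = x ∧ Y ω = y}).toReal *
      Real.log ((μ {ω | X ω = x ∧ Y ω = y}).toReal /
        ((μ {ω | X ω = x}).toReal * (μ {ω | Y ω = y}).toReal))

/- ## Auxiliary lemmas -/

lemma gibbs_term_strict (p q : ℝ) (hp : 0 < p) (hq : 0 < q) (hne : p ≠ q) :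
    p - q < p * Real.log (p / q) := by
  have h1 : Real.log (q / p) < q / p - 1 := Real.log_lt_sub_one_of_pos (by positivity) (by
    intro h; apply hne; field_simp at h; linarith)
  have h2 : Real.log (p / q) = - Real.log (q / p) := by rw [← Real.log_inv, inv_div]
  have h3 : p * Real.log (q / p) < p * (q / p - 1) := (mul_lt_mul_iff_right₀ hp).mpr h1
  have h4 : p * (q / p) = q := by field_simp
  rw [h2]; nlinarith

lemma gibbs_term (p q : ℝ) (hp : 0 ≤ p) (hq : 0 ≤ q) (h0 : q = 0 → p = 0) :
    p - q ≤ p * Real.log (p / q) := by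
  rcases eq_or_lt_of_le hp with h | h
  · simp [← h]; linarith
  · have hq' : 0 < q := by
      rcases eq_or_lt_of_le hq with h' | h'
      · exact absurd (h0 h'.symm) (by linarith)
      · exact h'
    rcases eq_or_ne p q with rfl | hne
    · simp [div_self (ne_of_gt h)]
    · exact le_of_lt (gibbs_term_strict p q h hq' hne)

lemma partition_meas {Ω : Type*} [MeasurableSpace Ω] (μ : Measure Ω) (g : Ω → ℕ)
    (hg : Measurable g) (n : ℕ) (hn : ∀ ω, g ω < n) (B : Set Ω) (hB : MeasurableSet B) :
    μ B = ∑ x ∈ range n, μ (B ∩ g ⁻¹' {x}) := by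
  rw [← measure_biUnion_finset]
  · congr 1
    ext ω
    simp only [Set.mem_iUnion, Finset.mem_range, Set.mem_inter_iff, Set.mem_preimage,
      Set.mem_singleton_iff]
    constructor
    · intro h; exact ⟨g ω, hn ω, h, rfl⟩
    · rintro ⟨x, -, h, -⟩; exact h
  · intro x _ y _ hxy
    apply Set.disjoint_left.mpr
    rintro ω ⟨-, hx⟩ ⟨-, hy⟩
    exact hxy (hx.symm.trans hy)
  · intro x _
    exact hB.inter (hg (measurableSet_singleton x))

section IndepAux

variable {Ω : Type*} [MeasurableSpace Ω] (μ : Measure Ω)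

lemma atom4 (X : Fin 4 → Ω → ℕ)
    (hIndep : iIndepFun X μ)
    (hUnif : ∀ i, ∀ k : ℕ, k < 1000 → μ {ω | X i ω = k} = 1 / 1000)
    (v : ℕ × ℕ × ℕ × ℕ) (h1 : v.1 < 1000) (h2 : v.2.1 < 1000) (h3 : v.2.2.1 < 1000)
    (h4 : v.2.2.2 < 1000) :
    μ {ω | X 0 ω = v.1 ∧ X 1 ω = v.2.1 ∧ X 2 ω = v.2.2.1 ∧ X 3 ω = v.2.2.2}
      = (1 / 1000 : ENNReal) ^ 4 := by
  set vi : Fin 4 → ℕ := ![v.1, v.2.1, v.2.2.1, v.2.2.2] with hvi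
  have hset : {ω | X 0 ω = v.1 ∧ X 1 ω = v.2.1 ∧ X 2 ω = v.2.2.1 ∧ X 3 ω = v.2.2.2}
      = ⋂ i, X i ⁻¹' {vi i} := by
    ext ω
    simp only [Set.mem_setOf_eq, Set.mem_iInter, Set.mem_preimage, Set.mem_singleton_iff]
    constructor
    · rintro ⟨h0, h1, h2, h3⟩ i
      fin_cases i <;> simpa [hvi]
    · intro h
      exact ⟨h 0, h 1, h 2, h 3⟩
  rw [hset, hIndep.meas_iInter (fun i => ⟨{vi i}, trivial, rfl⟩)]
  have hμ : ∀ i : Fin 4, μ (X i ⁻¹' {vi i}) = 1 / 1000 := by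
    intro i
    have hb : vi i < 1000 := by fin_cases i <;> simpa [hvi]
    exact hUnif i (vi i) hb
  rw [Finset.prod_congr rfl (fun i _ => hμ i)]
  simp

lemma count4 (X : Fin 4 → Ω → ℕ)
    (hMeas : ∀ i, Measurable (X i))
    (hVal : ∀ i ω, X i ω < 1000)
    (hIndep : iIndepFun X μ)
    (hUnif : ∀ i, ∀ k : ℕ, k < 1000 → μ {ω | X i ω = k} = 1 / 1000)
    (P : ℕ × ℕ × ℕ × ℕ → Prop) [DecidablePred P] :
    μ {ω | P (X 0 ω, X 1 ω, X 2 ω, X 3 ω)}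
      = (((range 1000 ×ˢ range 1000 ×ˢ range 1000 ×ˢ range 1000).filter P).card : ENNReal)
          * (1 / 1000 : ENNReal) ^ 4 := by
  set F := (range 1000 ×ˢ range 1000 ×ˢ range 1000 ×ˢ range 1000).filter P with hF
  set A : ℕ × ℕ × ℕ × ℕ → Set Ω :=
    fun v => {ω | X 0 ω = v.1 ∧ X 1 ω = v.2.1 ∧ X 2 ω = v.2.2.1 ∧ X 3 ω = v.2.2.2} with hA
  have hset : {ω | P (X 0 ω, X 1 ω, X 2 ω, X 3 ω)} = ⋃ v ∈ F, A v := by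
    ext ω
    simp only [Set.mem_setOf_eq, Set.mem_iUnion, hF, Finset.mem_filter, Finset.mem_product,
      Finset.mem_range, hA]
    constructor
    · intro h
      exact ⟨(X 0 ω, X 1 ω, X 2 ω, X 3 ω), ⟨⟨hVal 0 ω, hVal 1 ω, hVal 2 ω, hVal 3 ω⟩, h⟩,
        rfl, rfl, rfl, rfl⟩
    · rintro ⟨v, ⟨-, hP⟩, e0, e1, e2, e3⟩
      rw [e0, e1, e2, e3]
      exact hP
  rw [hset, measure_biUnion_finset]
  · rw [Finset.sum_congr rfl (fun v hv => by
      simp only [hF, Finset.mem_filter, Finset.mem_product, Finset.mem_range] at hv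
      exact atom4 μ X hIndep hUnif v hv.1.1 hv.1.2.1 hv.1.2.2.1 hv.1.2.2.2)]
    rw [Finset.sum_const, nsmul_eq_mul]
  · intro v _ w _ hvw
    apply Set.disjoint_left.mpr
    rintro ω ⟨a0, a1, a2, a3⟩ ⟨b0, b1, b2, b3⟩
    exact hvw (by ext <;> simp_all)
  · intro v _
    have : A v = X 0 ⁻¹' {v.1} ∩ (X 1 ⁻¹' {v.2.1} ∩ (X 2 ⁻¹' {v.2.2.1} ∩ X 3 ⁻¹' {v.2.2.2})) := by
      ext ω; simp [hA, Set.mem_inter_iff, and_assoc]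
    rw [this]
    exact ((hMeas 0) (measurableSet_singleton _)).inter
      (((hMeas 1) (measurableSet_singleton _)).inter
        (((hMeas 2) (measurableSet_singleton _)).inter ((hMeas 3) (measurableSet_singleton _))))

lemma count1 (Y : Ω → ℕ)
    (hM : Measurable Y)
    (hVal : ∀ ω, Y ω < 1000)
    (hUnif : ∀ k : ℕ, k < 1000 → μ {ω | Y ω = k} = 1 / 1000)
    (Q : ℕ → Prop) [DecidablePred Q] :
    μ {ω | Q (Y ω)} = (((range 1000).filter Q).card : ENNReal) * (1 / 1000 : ENNReal) := by
  have hset : {ω | Q (Y ω)} = ⋃ k ∈ (range 1000).filter Q, {ω | Y ω = k} := by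
    ext ω
    simp only [Set.mem_setOf_eq, Set.mem_iUnion, Finset.mem_filter, Finset.mem_range]
    constructor
    · intro h; exact ⟨Y ω, ⟨hVal ω, h⟩, rfl⟩
    · rintro ⟨k, ⟨-, hQ⟩, hk⟩; rw [hk]; exact hQ
  rw [hset, measure_biUnion_finset]
  · rw [Finset.sum_congr rfl (fun k hk => by
      simp only [Finset.mem_filter, Finset.mem_range] at hk
      exact hUnif k hk.1)]
    rw [Finset.sum_const, nsmul_eq_mul]
  · intro a _ b _ hab
    apply Set.disjoint_left.mpr
    rintro ω ha hb
    exact hab (ha.symm.trans hb)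
  · intro k _
    exact hM (measurableSet_singleton k)

end IndepAux

/- ## Counting lemmas -/

def T4 : Finset (ℕ × ℕ × ℕ × ℕ) := range 1000 ×ˢ range 1000 ×ˢ range 1000 ×ˢ range 1000

def Pxy (x y : ℕ) (v : ℕ × ℕ × ℕ × ℕ) : Prop :=
  v.1 / 100 % 10 = x ∧ (v.1 + v.2.1 + v.2.2.1 + v.2.2.2) / 1000 = y

instance (x y : ℕ) : DecidablePred (Pxy x y) := fun v => by unfold Pxy; infer_instance

def n3 (x : ℕ) : ℕ := (T4.filter (Pxy x 3)).card

lemma mem_filter_iff (x : ℕ) (v : ℕ × ℕ × ℕ × ℕ) :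
    v ∈ T4.filter (Pxy x 3) ↔ (v.1 < 1000 ∧ v.2.1 < 1000 ∧ v.2.2.1 < 1000 ∧ v.2.2.2 < 1000)
      ∧ v.1 / 100 % 10 = x ∧ (v.1 + v.2.1 + v.2.2.1 + v.2.2.2) / 1000 = 3 := by
  simp [T4, Pxy, Finset.mem_filter, Finset.mem_product, and_assoc]

lemma n3_le {x : ℕ} (hx : x < 10) : n3 0 ≤ n3 x := by
  apply Finset.card_le_card_of_injOn (fun v => (v.1 + 100 * x, v.2))
  · intro v hv
    simp only [Finset.mem_coe, mem_filter_iff] at hv ⊢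
    obtain ⟨⟨h1, h2, h3, h4⟩, hd, hs⟩ := hv
    exact ⟨⟨by omega, h2, h3, h4⟩, by omega, by omega⟩
  · intro v _ w _ h
    simp only [Prod.mk.injEq] at h
    exact Prod.ext (by omega) h.2

lemma n3_lt : n3 0 < n3 9 := by
  have hinj : Set.InjOn (fun v : ℕ × ℕ × ℕ × ℕ => (v.1 + 900, v.2)) (T4.filter (Pxy 0 3)) := by
    intro v _ w _ h
    simp only [Prod.mk.injEq] at h
    exact Prod.ext (by omega) h.2
  have hsub : (T4.filter (Pxy 0 3)).image (fun v => (v.1 + 900, v.2)) ⊆ T4.filter (Pxy 9 3) := by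
    rw [Finset.image_subset_iff]
    intro v hv
    simp only [mem_filter_iff] at hv ⊢
    obtain ⟨⟨h1, h2, h3, h4⟩, hd, hs⟩ := hv
    exact ⟨⟨by omega, h2, h3, h4⟩, by omega, by omega⟩
  rw [n3, n3, ← Finset.card_image_of_injOn hinj]
  apply Finset.card_lt_card
  rw [Finset.ssubset_iff_of_subset hsub]
  refine ⟨(999, 700, 700, 700), ?_, ?_⟩
  · simp only [mem_filter_iff]; norm_num
  · intro hmem
    simp only [Finset.mem_image] at hmem
    obtain ⟨v, hv, he⟩ := hmem
    simp only [mem_filter_iff] at hv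
    simp only [Prod.mk.injEq] at he
    obtain ⟨⟨h1, h2, h3, h4⟩, hd, hs⟩ := hv
    have : v.2.1 = 700 ∧ v.2.2.1 = 700 ∧ v.2.2.2 = 700 := by
      obtain ⟨-, h⟩ := he
      exact ⟨congrArg Prod.fst h, congrArg (fun p => p.2.1) h, congrArg (fun p => p.2.2) h⟩
    omega

lemma n3_pos : 0 < n3 0 := by
  rw [n3, Finset.card_pos]
  exact ⟨(99, 999, 999, 999), by simp only [mem_filter_iff]; norm_num⟩

lemma sum_helper (m : ℕ → ℕ) (hle : ∀ i < 10, m 0 ≤ m i) (hlt : m 0 < m 9) :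
    10 * m 0 < ∑ x ∈ range 10, m x := by
  have h : ∑ _x ∈ range 10, m 0 < ∑ x ∈ range 10, m x := by
    apply Finset.sum_lt_sum
    · intro i hi; exact hle i (Finset.mem_range.mp hi)
    · exact ⟨9, by norm_num, hlt⟩
  calc 10 * m 0 = ∑ _x ∈ range 10, m 0 := by simp [mul_comm]
    _ < _ := h

lemma n3_sum : 10 * n3 0 < ∑ x ∈ range 10, n3 x :=
  sum_helper n3 (fun _ hi => n3_le hi) n3_lt

lemma filter_digit_eq : (range 1000).filter (fun n => n / 100 % 10 = 0) = range 100 := by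
  ext n
  simp only [Finset.mem_filter, Finset.mem_range]
  omega
/-- For `A, B, C, D` independent uniform on `{0,...,999}`, the hundreds digit `a1` of `A`
and the thousands digit `e0 = ⌊S/1000⌋` of `S = A + B + C + D` are not independent;
equivalently, their mutual information is strictly positive. -/
theorem hundreds_digit_dep_thousands_digit_of_sum
    {Ω : Type*} [MeasurableSpace Ω] (μ : Measure Ω) [IsProbabilityMeasure μ]
    (X : Fin 4 → Ω → ℕ)
    (hIndep : iIndepFun X μ)
    (hMeas : ∀ i, Measurable (X i))
    (hVal : ∀ i ω, X i ω < 1000)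
    (hUnif : ∀ i, ∀ k : ℕ, k < 1000 → μ {ω | X i ω = k} = 1 / 1000) :
    ¬ IndepFun (fun ω => X 0 ω / 100 % 10)
        (fun ω => (X 0 ω + X 1 ω + X 2 ω + X 3 ω) / 1000) μ
      ∧ 0 < mutualInfoNat μ (fun ω => X 0 ω / 100 % 10)
          (fun ω => (X 0 ω + X 1 ω + X 2 ω + X 3 ω) / 1000) 10 4 := by
  -- events
  set E12 : ℕ → ℕ → Set Ω := fun x y =>
    {ω | X 0 ω / 100 % 10 = x ∧ (X 0 ω + X 1 ω + X 2 ω + X 3 ω) / 1000 = y} with hE12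
  set E1 : ℕ → Set Ω := fun x => {ω | X 0 ω / 100 % 10 = x} with hE1
  set E2 : ℕ → Set Ω := fun y => {ω | (X 0 ω + X 1 ω + X 2 ω + X 3 ω) / 1000 = y} with hE2
  -- measurability
  have hMa : Measurable (fun ω => X 0 ω / 100 % 10) :=
    (measurable_from_top (f := fun n : ℕ => n / 100 % 10)).comp (hMeas 0)
  have hMe : Measurable (fun ω => (X 0 ω + X 1 ω + X 2 ω + X 3 ω) / 1000) :=
    (measurable_from_top (f := fun n : ℕ => n / 1000)).comp
      ((((hMeas 0).add (hMeas 1)).add (hMeas 2)).add (hMeas 3))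
  -- real-valued probabilities
  set p : ℕ → ℕ → ℝ := fun x y => (μ (E12 x y)).toReal with hp
  set p1 : ℕ → ℝ := fun x => (μ (E1 x)).toReal with hp1
  set p2 : ℕ → ℝ := fun y => (μ (E2 y)).toReal with hp2
  have hnn : ∀ x y, 0 ≤ p x y := fun x y => ENNReal.toReal_nonneg
  have hnn1 : ∀ x, 0 ≤ p1 x := fun x => ENNReal.toReal_nonneg
  have hnn2 : ∀ y, 0 ≤ p2 y := fun y => ENNReal.toReal_nonneg
  have hmono1 : ∀ x y, p x y ≤ p1 x := fun x y =>
    ENNReal.toReal_mono (measure_ne_top μ _) (measure_mono (fun ω h => h.1))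
  have hmono2 : ∀ x y, p x y ≤ p2 y := fun x y =>
    ENNReal.toReal_mono (measure_ne_top μ _) (measure_mono (fun ω h => h.2))
  -- counting values
  set cr : ℝ := ((1 : ℝ) / 1000) ^ 4 with hcr
  have hcrpos : 0 < cr := by rw [hcr]; norm_num
  have hcrtoReal : ((1 / 1000 : ENNReal) ^ 4).toReal = cr := by
    rw [hcr]; simp [ENNReal.toReal_pow, ENNReal.toReal_div]
  have hc12 : ∀ x y, μ (E12 x y)
      = ((T4.filter (Pxy x y)).card : ENNReal) * (1 / 1000 : ENNReal) ^ 4 :=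
    fun x y => count4 μ X hMeas hVal hIndep hUnif (Pxy x y)
  have hpval : ∀ x, p x 3 = (n3 x : ℝ) * cr := by
    intro x
    rw [hp]
    simp only
    rw [hc12 x 3, ENNReal.toReal_mul, hcrtoReal, ENNReal.toReal_natCast]
    rfl
  -- p1 0 = 1/10
  have hp10 : p1 0 = 1 / 10 := by
    have h := count1 μ (X 0) (hMeas 0) (hVal 0) (hUnif 0) (fun n => n / 100 % 10 = 0)
    rw [filter_digit_eq, Finset.card_range] at h
    rw [hp1]
    simp only
    rw [show E1 0 = {ω | (fun n => n / 100 % 10 = 0) (X 0 ω)} from rfl, h,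
      ENNReal.toReal_mul, ENNReal.toReal_natCast, ENNReal.toReal_div]
    norm_num
  -- partitions
  have ha1lt : ∀ ω, X 0 ω / 100 % 10 < 10 := fun ω => Nat.mod_lt _ (by norm_num)
  have he0lt : ∀ ω, (X 0 ω + X 1 ω + X 2 ω + X 3 ω) / 1000 < 4 := by
    intro ω
    have h0 := hVal 0 ω; have h1 := hVal 1 ω; have h2 := hVal 2 ω; have h3 := hVal 3 ω
    omega
  have hpart1 : ∑ x ∈ range 10, p1 x = 1 := by
    have h := partition_meas μ _ hMa 10 ha1lt Set.univ MeasurableSet.univ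
    rw [measure_univ] at h
    have h2 : ∀ x ∈ range 10, μ (Set.univ ∩ (fun ω => X 0 ω / 100 % 10) ⁻¹' {x}) = μ (E1 x) :=
      fun x _ => by rw [Set.univ_inter]; rfl
    rw [Finset.sum_congr rfl h2] at h
    rw [hp1]
    simp only
    rw [← ENNReal.toReal_sum (fun x _ => measure_ne_top μ _), ← h, ENNReal.toReal_one]
  have hpart2 : ∑ y ∈ range 4, p2 y = 1 := by
    have h := partition_meas μ _ hMe 4 he0lt Set.univ MeasurableSet.univ
    rw [measure_univ] at h
    have h2 : ∀ y ∈ range 4,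
        μ (Set.univ ∩ (fun ω => (X 0 ω + X 1 ω + X 2 ω + X 3 ω) / 1000) ⁻¹' {y}) = μ (E2 y) :=
      fun y _ => by rw [Set.univ_inter]; rfl
    rw [Finset.sum_congr rfl h2] at h
    rw [hp2]
    simp only
    rw [← ENNReal.toReal_sum (fun y _ => measure_ne_top μ _), ← h, ENNReal.toReal_one]
  have hpart12 : ∀ x, ∑ y ∈ range 4, p x y = p1 x := by
    intro x
    have hBmeas : MeasurableSet (E1 x) := hMa (measurableSet_singleton x)
    have h := partition_meas μ _ hMe 4 he0lt (E1 x) hBmeas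
    have h2 : ∀ y ∈ range 4,
        μ (E1 x ∩ (fun ω => (X 0 ω + X 1 ω + X 2 ω + X 3 ω) / 1000) ⁻¹' {y}) = μ (E12 x y) :=
      fun y _ => rfl
    rw [Finset.sum_congr rfl h2] at h
    rw [hp1, hp]
    simp only
    rw [← ENNReal.toReal_sum (fun y _ => measure_ne_top μ _), ← h]
  have hpart21 : p2 3 = ∑ x ∈ range 10, p x 3 := by
    have hBmeas : MeasurableSet (E2 3) := hMe (measurableSet_singleton 3)
    have h := partition_meas μ _ hMa 10 ha1lt (E2 3) hBmeas
    have h2 : ∀ x ∈ range 10,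
        μ (E2 3 ∩ (fun ω => X 0 ω / 100 % 10) ⁻¹' {x}) = μ (E12 x 3) := by
      intro x _
      congr 1
      ext ω
      simp only [hE2, hE12, Set.mem_inter_iff, Set.mem_setOf_eq, Set.mem_preimage,
        Set.mem_singleton_iff]
      tauto
    rw [Finset.sum_congr rfl h2] at h
    rw [hp2, hp]
    simp only
    rw [← ENNReal.toReal_sum (fun x _ => measure_ne_top μ _), ← h]
  -- the strict inequality
  have hstrict : p 0 3 < p1 0 * p2 3 := by
    have hcast : 10 * (n3 0 : ℝ) < ∑ x ∈ range 10, (n3 x : ℝ) := by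
      have h1 : ((10 * n3 0 : ℕ) : ℝ) < ((∑ x ∈ range 10, n3 x : ℕ) : ℝ) :=
        Nat.cast_lt.mpr n3_sum
      rw [Nat.cast_mul, Nat.cast_sum] at h1
      simpa only [Nat.cast_ofNat] using h1
    have hsum3 : p2 3 = (∑ x ∈ range 10, (n3 x : ℝ)) * cr := by
      rw [hpart21, Finset.sum_congr rfl (fun x _ => hpval x), ← Finset.sum_mul]
    rw [hpval 0, hp10, hsum3]
    nlinarith [mul_lt_mul_of_pos_right hcast hcrpos]
  have hp03pos : 0 < p 0 3 := by
    rw [hpval 0]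
    have : (0 : ℝ) < (n3 0 : ℝ) := by exact_mod_cast n3_pos
    positivity
  have hp23pos : 0 < p2 3 := lt_of_lt_of_le hp03pos (hmono2 0 3)
  have hq03pos : 0 < p1 0 * p2 3 := by rw [hp10]; positivity
  constructor
  · -- not independent
    intro h
    have heq := h.measure_inter_preimage_eq_mul (s := {0}) (t := {3})
      (measurableSet_singleton 0) (measurableSet_singleton 3)
    have heq2 : μ (E12 0 3) = μ (E1 0) * μ (E2 3) := heq
    have : p 0 3 = p1 0 * p2 3 := by
      rw [hp, hp1, hp2]
      simp only
      rw [heq2, ENNReal.toReal_mul]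
    linarith
  · -- positive mutual information
    show 0 < ∑ x ∈ range 10, ∑ y ∈ range 4, p x y * Real.log (p x y / (p1 x * p2 y))
    rw [← Finset.sum_product']
    have hterm : ∀ z ∈ range 10 ×ˢ range 4,
        p z.1 z.2 - p1 z.1 * p2 z.2 ≤ p z.1 z.2 * Real.log (p z.1 z.2 / (p1 z.1 * p2 z.2)) := by
      intro z _
      apply gibbs_term _ _ (hnn _ _) (mul_nonneg (hnn1 _) (hnn2 _))
      intro h0
      rcases mul_eq_zero.mp h0 with h' | h'
      · exact le_antisymm (h' ▸ hmono1 z.1 z.2) (hnn _ _)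
      · exact le_antisymm (h' ▸ hmono2 z.1 z.2) (hnn _ _)
    have hzero : ∑ z ∈ range 10 ×ˢ range 4, (p z.1 z.2 - p1 z.1 * p2 z.2) = 0 := by
      rw [Finset.sum_sub_distrib]
      have e1 : ∑ z ∈ range 10 ×ˢ range 4, p z.1 z.2 = 1 := by
        rw [Finset.sum_product]
        dsimp only
        rw [Finset.sum_congr rfl (fun x _ => hpart12 x), hpart1]
      have e2 : ∑ z ∈ range 10 ×ˢ range 4, p1 z.1 * p2 z.2 = 1 := by
        rw [Finset.sum_product]
        dsimp only
        have : ∀ x ∈ range 10, ∑ y ∈ range 4, p1 x * p2 y = p1 x := by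
          intro x _
          rw [← Finset.mul_sum, hpart2, mul_one]
        rw [Finset.sum_congr rfl this, hpart1]
      rw [e1, e2, sub_self]
    have hlt : ∑ z ∈ range 10 ×ˢ range 4, (p z.1 z.2 - p1 z.1 * p2 z.2)
        < ∑ z ∈ range 10 ×ˢ range 4, p z.1 z.2 * Real.log (p z.1 z.2 / (p1 z.1 * p2 z.2)) := by
      apply Finset.sum_lt_sum hterm
      refine ⟨(0, 3), ?_, ?_⟩
      · simp [Finset.mem_product]
      · exact gibbs_term_strict _ _ hp03pos hq03pos (ne_of_lt hstrict)
    linarith [hzero ▸ hlt]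
end

section
/- Let A, B, C, D be independent random variables uniformly distributed on {0,1,...,999}, let a3 be the units digit of A, and let e0 = floor((A+B+C+D)/1000). Then P(e0 >= 1 | a3 = 0) < P(e0 >= 1 | a3 = 9); in particular a3 and e0 are dependent. -/
open MeasureTheory ProbabilityTheory Finset
open scoped ENNReal

/-- For `A, B, C, D` independent uniform on `{0,...,999}`, with `a3 = A % 10` the units digit
of `A` and `e0 = ⌊(A+B+C+D)/1000⌋`, we have `P(e0 ≥ 1 | a3 = 0) < P(e0 ≥ 1 | a3 = 9)`;
in particular `a3` and `e0` are dependent. -/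
theorem units_digit_dep_thousands_digit_of_sum
    {Ω : Type*} [MeasurableSpace Ω] (μ : Measure Ω) [IsProbabilityMeasure μ]
    (X : Fin 4 → Ω → ℕ)
    (hIndep : iIndepFun X μ)
    (hMeas : ∀ i, Measurable (X i))
    (hVal : ∀ i ω, X i ω < 1000)
    (hUnif : ∀ i, ∀ k : ℕ, k < 1000 → μ {ω | X i ω = k} = 1 / 1000) :
    μ[|{ω | X 0 ω % 10 = 0}] {ω | 1 ≤ (X 0 ω + X 1 ω + X 2 ω + X 3 ω) / 1000}
        < μ[|{ω | X 0 ω % 10 = 9}] {ω | 1 ≤ (X 0 ω + X 1 ω + X 2 ω + X 3 ω) / 1000}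
      ∧ ¬ IndepFun (fun ω => X 0 ω % 10)
          (fun ω => (X 0 ω + X 1 ω + X 2 ω + X 3 ω) / 1000) μ := by
  classical
  have mN : ∀ s : Set ℕ, MeasurableSet s := fun s => s.to_countable.measurableSet
  set S : Ω → ℕ := fun ω => X 1 ω + X 2 ω + X 3 ω with hSdef
  have hSmeas : Measurable S := ((hMeas 1).add (hMeas 2)).add (hMeas 3)
  have hSsum : (∑ j ∈ ({1, 2, 3} : Finset (Fin 4)), X j) = S := by
    funext ω
    show (∑ j ∈ ({1, 2, 3} : Finset (Fin 4)), X j) ω = _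
    simp [Finset.sum_apply, hSdef, Finset.sum_insert, Finset.mem_insert]
    omega
  have hindep : IndepFun (X 0) S μ := by
    have h := hIndep.indepFun_finsetSum_of_notMem hMeas
      (s := ({1, 2, 3} : Finset (Fin 4))) (i := 0) (by decide)
    rw [hSsum] at h
    exact h.symm
  -- product formula for events on X 0 and S
  have hprod : ∀ a t : ℕ, μ ({ω | X 0 ω = a} ∩ {ω | t ≤ S ω})
      = μ {ω | X 0 ω = a} * μ {ω | t ≤ S ω} := by
    intro a t
    exact hindep.measure_inter_preimage_eq_mul {a} {n | t ≤ n} (mN _) (mN _)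
  -- the target event rewritten
  have hT : {ω | 1 ≤ (X 0 ω + X 1 ω + X 2 ω + X 3 ω) / 1000}
      = {ω | 1000 ≤ X 0 ω + S ω} := by
    ext ω
    simp only [Set.mem_setOf_eq, hSdef]
    omega
  -- decomposition of the joint event
  have hdecomp : ∀ d : ℕ, μ ({ω | X 0 ω % 10 = d} ∩ {ω | 1000 ≤ X 0 ω + S ω})
      = ∑ a ∈ (range 1000).filter (· % 10 = d),
          (1 / 1000 : ℝ≥0∞) * μ {ω | 1000 - a ≤ S ω} := by
    intro d
    have hset : {ω | X 0 ω % 10 = d} ∩ {ω | 1000 ≤ X 0 ω + S ω}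
        = ⋃ a ∈ (range 1000).filter (· % 10 = d),
            ({ω | X 0 ω = a} ∩ {ω | 1000 - a ≤ S ω}) := by
      ext ω
      simp only [Set.mem_inter_iff, Set.mem_setOf_eq, Set.mem_iUnion, mem_filter, mem_range,
        exists_prop]
      constructor
      · rintro ⟨h1, h2⟩
        exact ⟨X 0 ω, ⟨hVal 0 ω, h1⟩, rfl, by omega⟩
      · rintro ⟨a, ⟨ha, hd⟩, h1, h2⟩
        constructor <;> omega
    rw [hset, measure_biUnion_finset]
    · refine Finset.sum_congr rfl fun a ha => ?_
      rw [hprod, hUnif 0 a (mem_range.mp (mem_filter.mp ha).1)]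
    · intro a _ b _ hab
      refine Set.disjoint_left.mpr ?_
      rintro ω ⟨h1, _⟩ ⟨h2, _⟩
      exact hab (h1 ▸ h2)
    · intro a _
      exact ((hMeas 0) (mN {a})).inter (hSmeas (mN {n | 1000 - a ≤ n}))
  -- measure of the conditioning events
  have hAd : ∀ d : ℕ, μ {ω | X 0 ω % 10 = d}
      = (((range 1000).filter (· % 10 = d)).card : ℝ≥0∞) * (1 / 1000) := by
    intro d
    have hset : {ω | X 0 ω % 10 = d}
        = ⋃ a ∈ (range 1000).filter (· % 10 = d), {ω | X 0 ω = a} := by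
      ext ω
      simp only [Set.mem_setOf_eq, Set.mem_iUnion, mem_filter, mem_range, exists_prop]
      constructor
      · intro h1
        exact ⟨X 0 ω, ⟨hVal 0 ω, h1⟩, rfl⟩
      · rintro ⟨a, ⟨_, hd⟩, h1⟩
        omega
    rw [hset, measure_biUnion_finset]
    · rw [Finset.sum_congr rfl fun a ha => hUnif 0 a (mem_range.mp (mem_filter.mp ha).1)]
      rw [Finset.sum_const, nsmul_eq_mul]
    · intro a _ b _ hab
      refine Set.disjoint_left.mpr ?_
      rintro ω h1 h2
      simp only [Set.mem_setOf_eq] at h1 h2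
      exact hab (h1 ▸ h2)
    · intro a _
      exact (hMeas 0) (mN {a})
  -- image description of the 9-residue class
  have himg : (range 1000).filter (· % 10 = 9)
      = ((range 1000).filter (· % 10 = 0)).image (· + 9) := by
    ext b
    simp only [mem_filter, mem_range, mem_image]
    constructor
    · rintro ⟨hb, h9⟩
      exact ⟨b - 9, ⟨by omega, by omega⟩, by omega⟩
    · rintro ⟨a, ⟨ha, h0⟩, rfl⟩
      omega
  have hinj : ∀ a ∈ (range 1000).filter (· % 10 = 0), ∀ b ∈ (range 1000).filter (· % 10 = 0),
      a + 9 = b + 9 → a = b := fun a _ b _ h => by omega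
  -- positivity of P(S = 991)
  have hq : (0 : ℝ≥0∞) < μ {ω | S ω = 991} := by
    set c : Fin 4 → ℕ := fun i => if i = 1 then 991 else 0 with hc
    have hclt : ∀ i : Fin 4, c i < 1000 := by
      intro i
      simp only [hc]
      split <;> norm_num
    have hmm := hIndep.meas_biInter (S := ({1, 2, 3} : Finset (Fin 4)))
      (s := fun i => X i ⁻¹' {c i}) (fun i _ => ⟨{c i}, mN _, rfl⟩)
    have hsub : (⋂ i ∈ ({1, 2, 3} : Finset (Fin 4)), X i ⁻¹' {c i})
        ⊆ {ω | S ω = 991} := by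
      intro ω hω
      simp only [Set.mem_iInter, Set.mem_preimage, Set.mem_singleton_iff] at hω
      have h1 := hω 1 (by decide)
      have h2 := hω 2 (by decide)
      have h3 := hω 3 (by decide)
      simp only [hc, if_pos rfl, if_neg (show (2 : Fin 4) ≠ 1 by decide),
        if_neg (show (3 : Fin 4) ≠ 1 by decide)] at h1 h2 h3
      simp only [Set.mem_setOf_eq, hSdef]
      omega
    have hge := measure_mono (μ := μ) hsub
    rw [hmm] at hge
    have hval : ∀ i : Fin 4, μ (X i ⁻¹' {c i}) = 1 / 1000 := fun i =>
      hUnif i (c i) (hclt i)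
    rw [Finset.prod_congr rfl (fun i _ => hval i), Finset.prod_const] at hge
    calc (0 : ℝ≥0∞) < (1 / 1000) ^ ({1, 2, 3} : Finset (Fin 4)).card := by
          rw [show ({1, 2, 3} : Finset (Fin 4)).card = 3 from rfl]
          exact ENNReal.pow_pos (by norm_num) 3
      _ ≤ μ {ω | S ω = 991} := hge
  -- strict tail inequality at a = 0
  have hstrict : μ {ω | 1000 - 0 ≤ S ω} < μ {ω | 1000 - (0 + 9) ≤ S ω} := by
    have hdisj : Disjoint {ω | S ω = 991} {ω | 1000 ≤ S ω} := by
      refine Set.disjoint_left.mpr ?_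
      intro ω h1 h2
      simp only [Set.mem_setOf_eq] at h1 h2
      omega
    have hun : {ω | S ω = 991} ∪ {ω | 1000 ≤ S ω} ⊆ {ω | 1000 - (0 + 9) ≤ S ω} := by
      rintro ω (h | h) <;> simp only [Set.mem_setOf_eq] at * <;> omega
    calc μ {ω | 1000 - 0 ≤ S ω}
        = μ {ω | 1000 ≤ S ω} := by norm_num
      _ < μ {ω | S ω = 991} + μ {ω | 1000 ≤ S ω} := by
          rw [add_comm]
          exact ENNReal.lt_add_right (measure_ne_top μ _) hq.ne'
      _ = μ ({ω | S ω = 991} ∪ {ω | 1000 ≤ S ω}) :=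
          (measure_union hdisj (hSmeas (mN {n | 1000 ≤ n}))).symm
      _ ≤ μ {ω | 1000 - (0 + 9) ≤ S ω} := measure_mono hun
  -- the key strict inequality between joint probabilities
  have h0F : (0 : ℕ) ∈ (range 1000).filter (· % 10 = 0) := by
    simp
  have hlt : μ ({ω | X 0 ω % 10 = 0} ∩ {ω | 1000 ≤ X 0 ω + S ω})
      < μ ({ω | X 0 ω % 10 = 9} ∩ {ω | 1000 ≤ X 0 ω + S ω}) := by
    rw [hdecomp 0, hdecomp 9, himg, Finset.sum_image hinj]
    rw [← Finset.add_sum_erase _ _ h0F,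
      ← Finset.add_sum_erase _ (fun a => (1 / 1000 : ℝ≥0∞) * μ {ω | 1000 - (a + 9) ≤ S ω}) h0F]
    refine ENNReal.add_lt_add_of_lt_of_le ?_ ?_ ?_
    · refine (ENNReal.sum_lt_top.mpr fun a _ => ?_).ne
      exact ENNReal.mul_lt_top (by norm_num) (measure_lt_top μ _)
    · exact (ENNReal.mul_lt_mul_iff_right (by norm_num) (by norm_num)).mpr hstrict
    · refine Finset.sum_le_sum fun a _ => ?_
      refine mul_le_mul_right (measure_mono fun ω h => ?_) _
      simp only [Set.mem_setOf_eq] at *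
      omega
  -- equality of the conditioning measures, and their nondegeneracy
  have hcardEq : (((range 1000).filter (· % 10 = 9)).card : ℝ≥0∞)
      = (((range 1000).filter (· % 10 = 0)).card : ℝ≥0∞) := by
    rw [himg, Finset.card_image_of_injOn fun a ha b hb h => hinj a ha b hb h]
  have hAeq : μ {ω | X 0 ω % 10 = 9} = μ {ω | X 0 ω % 10 = 0} := by
    rw [hAd 9, hAd 0, hcardEq]
  have hA0ne : μ {ω | X 0 ω % 10 = 0} ≠ 0 := by
    have hsub : {ω | X 0 ω = 0} ⊆ {ω | X 0 ω % 10 = 0} := by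
      intro ω h
      simp only [Set.mem_setOf_eq] at *
      omega
    have := measure_mono (μ := μ) hsub
    rw [hUnif 0 0 (by norm_num)] at this
    intro h
    rw [h] at this
    simp at this
  have hA0top : μ {ω | X 0 ω % 10 = 0} ≠ ⊤ := measure_ne_top μ _
  have hA0m : MeasurableSet {ω | X 0 ω % 10 = 0} := (hMeas 0) (mN {n | n % 10 = 0})
  have hA9m : MeasurableSet {ω | X 0 ω % 10 = 9} := (hMeas 0) (mN {n | n % 10 = 9})
  have hcond : μ[|{ω | X 0 ω % 10 = 0}] {ω | 1 ≤ (X 0 ω + X 1 ω + X 2 ω + X 3 ω) / 1000}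
      < μ[|{ω | X 0 ω % 10 = 9}] {ω | 1 ≤ (X 0 ω + X 1 ω + X 2 ω + X 3 ω) / 1000} := by
    rw [cond_apply hA0m, cond_apply hA9m, hAeq, hT]
    exact (ENNReal.mul_lt_mul_iff_right (ENNReal.inv_ne_zero.mpr hA0top)
      (ENNReal.inv_ne_top.mpr hA0ne)).mpr hlt
  refine ⟨hcond, fun h => ?_⟩
  have h0 := h.measure_inter_preimage_eq_mul {0} {n | 1 ≤ n} (mN _) (mN _)
  have h9 := h.measure_inter_preimage_eq_mul {9} {n | 1 ≤ n} (mN _) (mN _)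
  have hpre0 : ((fun ω => X 0 ω % 10) ⁻¹' {0} : Set Ω) = {ω | X 0 ω % 10 = 0} := rfl
  have hpre9 : ((fun ω => X 0 ω % 10) ⁻¹' {9} : Set Ω) = {ω | X 0 ω % 10 = 9} := rfl
  have hpret : ((fun ω => (X 0 ω + X 1 ω + X 2 ω + X 3 ω) / 1000) ⁻¹' {n | 1 ≤ n} : Set Ω)
      = {ω | 1 ≤ (X 0 ω + X 1 ω + X 2 ω + X 3 ω) / 1000} := rfl
  rw [hpre0, hpret] at h0
  rw [hpre9, hpret] at h9
  have heq : μ[|{ω | X 0 ω % 10 = 0}] {ω | 1 ≤ (X 0 ω + X 1 ω + X 2 ω + X 3 ω) / 1000}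
      = μ[|{ω | X 0 ω % 10 = 9}] {ω | 1 ≤ (X 0 ω + X 1 ω + X 2 ω + X 3 ω) / 1000} := by
    rw [cond_apply hA0m, cond_apply hA9m, h0, h9, hAeq]
  exact absurd hcond (by rw [heq]; exact lt_irrefl _)
end

section
/- Let A, B, C, D be independent random variables uniformly distributed on {0,1,...,999}. For each digit place i in {1,2,3} (hundreds, tens, units of the addends), let e_i denote the corresponding digit of S = A + B + C + D (so e_1 is the hundreds digit of S, e_2 the tens digit, e_3 the units digit), and let a_i denote the corresponding digit of A. Then a_i and e_i are independent for each i in {1,2,3}. -/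
open MeasureTheory ProbabilityTheory

private lemma shift_mod_aux (M t x : ℕ) (hM : 0 < M) :
    (x + (M - t % M) + t) % M = x % M := by
  have h1 : t % M < M := Nat.mod_lt _ hM
  have h2 : M * (t / M) + t % M = t := Nat.div_add_mod t M
  have h4 : M * (t / M + 1) = M * (t / M) + M := by ring
  have h3 : x + (M - t % M) + t = x + M * (t / M + 1) := by omega
  rw [h3, Nat.add_mul_mod_self_left]

private def bshift (M s k : ℕ) : ℕ := M * (k / M) + (k % M + s) % M

private lemma bshift_mod (M s k : ℕ) : bshift M s k % M = (k + s) % M := by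
  unfold bshift
  rw [Nat.mul_add_mod, Nat.mod_mod_of_dvd _ dvd_rfl, Nat.mod_add_mod]

private lemma bshift_div (M s k : ℕ) (hM : 0 < M) : bshift M s k / M = k / M := by
  unfold bshift
  rw [Nat.mul_add_div hM, Nat.div_eq_of_lt (Nat.mod_lt _ hM), Nat.add_zero]

private lemma bshift_lt {M N : ℕ} (hM : 0 < M) (hMN : M ∣ N) (s : ℕ) {k : ℕ} (hk : k < N) :
    bshift M s k < N := by
  have h1 : (k % M + s) % M < M := Nat.mod_lt _ hM
  have h2 : k / M < N / M := Nat.div_lt_div_of_lt_of_dvd hMN hk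
  have h3 : M * (N / M) = N := Nat.mul_div_cancel' hMN
  unfold bshift
  calc M * (k / M) + (k % M + s) % M < M * (k / M) + M := by omega
    _ = M * (k / M + 1) := by ring
    _ ≤ M * (N / M) := Nat.mul_le_mul_left _ (by omega)
    _ = N := h3

private lemma eq_of_div_mod {M a b : ℕ} (hd : a / M = b / M) (hm : a % M = b % M) : a = b := by
  have h1 : M * (a / M) + a % M = a := Nat.div_add_mod a M
  have h2 : M * (b / M) + b % M = b := Nat.div_add_mod b M
  rw [hd] at h1; omega

private lemma bshift_inv1 (M t k : ℕ) (hM : 0 < M) :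
    bshift M (M - t % M) (bshift M t k) = k := by
  apply eq_of_div_mod (M := M)
  · rw [bshift_div _ _ _ hM, bshift_div _ _ _ hM]
  · rw [bshift_mod, ← Nat.mod_add_mod, bshift_mod, Nat.mod_add_mod]
    rw [show k + t + (M - t % M) = k + (M - t % M) + t by omega]
    exact shift_mod_aux M t k hM

private lemma bshift_inv2 (M t j : ℕ) (hM : 0 < M) :
    bshift M t (bshift M (M - t % M) j) = j := by
  apply eq_of_div_mod (M := M)
  · rw [bshift_div _ _ _ hM, bshift_div _ _ _ hM]
  · rw [bshift_mod, ← Nat.mod_add_mod, bshift_mod, Nat.mod_add_mod]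
    exact shift_mod_aux M t j hM

private lemma card_shift (N M d v t : ℕ) (hM : 0 < M) (hMN : M ∣ N) :
    ((Finset.range N).filter (fun k => (k + t) % M / d = v)).card =
    ((Finset.range N).filter (fun k => k % M / d = v)).card := by
  apply Finset.card_bij' (fun k _ => bshift M t k) (fun j _ => bshift M (M - t % M) j)
  · intro k hk
    simp only [Finset.mem_filter, Finset.mem_range] at hk ⊢
    refine ⟨bshift_lt hM hMN t hk.1, ?_⟩
    rw [bshift_mod]; exact hk.2
  · intro j hj
    simp only [Finset.mem_filter, Finset.mem_range] at hj ⊢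
    refine ⟨bshift_lt hM hMN _ hj.1, ?_⟩
    have h : (bshift M (M - t % M) j + t) % M = j % M := by
      rw [← Nat.mod_add_mod, bshift_mod, Nat.mod_add_mod]
      exact shift_mod_aux M t j hM
    rw [h]; exact hj.2
  · intro k _; exact bshift_inv1 M t k hM
  · intro j _; exact bshift_inv2 M t j hM

private lemma measure_pred_eq {Ω : Type*} [MeasurableSpace Ω] (μ : Measure Ω)
    (Y : Ω → ℕ) (hYm : Measurable Y) (hYv : ∀ ω, Y ω < 1000)
    (hYu : ∀ k, k < 1000 → μ {ω | Y ω = k} = 1 / 1000)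
    (P : ℕ → Prop) [DecidablePred P] :
    μ {ω | P (Y ω)} = ((Finset.range 1000).filter P).card * (1 / 1000 : ENNReal) := by
  have hset : {ω | P (Y ω)} = ⋃ k ∈ (Finset.range 1000).filter P, Y ⁻¹' {k} := by
    ext ω
    simp only [Set.mem_setOf_eq, Set.mem_iUnion, Set.mem_preimage, Set.mem_singleton_iff,
      Finset.mem_filter, Finset.mem_range, exists_prop]
    constructor
    · intro h; exact ⟨Y ω, ⟨hYv ω, h⟩, rfl⟩
    · rintro ⟨k, ⟨_, hk⟩, rfl⟩; exact hk
  rw [hset, measure_biUnion_finset ?_ (fun k _ => hYm (measurableSet_singleton k))]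
  · rw [Finset.sum_congr rfl
      (fun k hk => show μ (Y ⁻¹' {k}) = 1 / 1000 from
        hYu k (Finset.mem_range.1 (Finset.mem_filter.1 hk).1)),
      Finset.sum_const, nsmul_eq_mul]
  · intro a _ b _ hab
    simp only [Function.onFun, Set.disjoint_left, Set.mem_preimage, Set.mem_singleton_iff]
    intro ω ha hb
    exact hab (ha ▸ hb ▸ rfl)

/-- For `A, B, C, D` independent uniform on `{0,...,999}` and `S = A+B+C+D`, for each
`i ∈ {1,2,3}` (hundreds, tens, units places, i.e. digit at place `10^(3-i)`), the digit
`a_i` of `A` and the digit `e_i` of `S` at that place are independent. -/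
theorem digit_of_addend_indep_same_digit_of_sum
    {Ω : Type*} [MeasurableSpace Ω] (μ : Measure Ω) [IsProbabilityMeasure μ]
    (X : Fin 4 → Ω → ℕ)
    (hIndep : iIndepFun X μ)
    (hMeas : ∀ i, Measurable (X i))
    (hVal : ∀ i ω, X i ω < 1000)
    (hUnif : ∀ i, ∀ k : ℕ, k < 1000 → μ {ω | X i ω = k} = 1 / 1000) :
    ∀ i : ℕ, i ∈ ({1, 2, 3} : Set ℕ) →
      IndepFun (fun ω => X 0 ω / 10 ^ (3 - i) % 10)
        (fun ω => (X 0 ω + X 1 ω + X 2 ω + X 3 ω) / 10 ^ (3 - i) % 10) μ := by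
  intro i hi
  simp only [Set.mem_insert_iff, Set.mem_singleton_iff] at hi
  classical
  have hMdvd0 : 10 ^ (3 - i) * 10 ∣ 1000 := by
    rcases hi with rfl | rfl | rfl <;> norm_num
  set d : ℕ := 10 ^ (3 - i) with hdd
  have hd0 : 0 < d := pow_pos (by norm_num) _
  set M : ℕ := d * 10 with hMM
  have hM0 : 0 < M := Nat.mul_pos hd0 (by norm_num)
  have hMdvd : M ∣ 1000 := hMdvd0
  set f : Ω → ℕ := fun ω => X 0 ω / d % 10 with hf
  set g : Ω → ℕ := fun ω => (X 0 ω + X 1 ω + X 2 ω + X 3 ω) / d % 10 with hgdef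
  set T : Ω → ℕ := fun ω => (X 0 ω + X 2 ω + X 3 ω) % M with hT
  -- pointwise identity for g
  have hgT : ∀ ω, g ω = (X 1 ω + T ω) % M / d := by
    intro ω
    show (X 0 ω + X 1 ω + X 2 ω + X 3 ω) / d % 10 = _
    rw [← Nat.mod_mul_right_div_self, ← hMM]
    congr 1
    rw [show X 0 ω + X 1 ω + X 2 ω + X 3 ω = X 1 ω + (X 0 ω + X 2 ω + X 3 ω) from by ring]
    exact (Nat.add_mod_mod _ _ _).symm
  -- measurability
  have hfMeas : Measurable f :=
    (Measurable.of_discrete (f := fun n : ℕ => n / d % 10)).comp (hMeas 0)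
  have hTMeas : Measurable T :=
    (Measurable.of_discrete (f := fun n : ℕ => n % M)).comp
      (((hMeas 0).add (hMeas 2)).add (hMeas 3))
  have hgMeas : Measurable g :=
    (Measurable.of_discrete (f := fun n : ℕ => n / d % 10)).comp
      ((((hMeas 0).add (hMeas 1)).add (hMeas 2)).add (hMeas 3))
  have hPairMeas : Measurable (fun ω => (f ω, T ω)) := hfMeas.prodMk hTMeas
  -- independence of (f, T) and X 1
  have c0 : (0 : Fin 4) ∈ ({0, 2, 3} : Finset (Fin 4)) := by decide
  have c2 : (2 : Fin 4) ∈ ({0, 2, 3} : Finset (Fin 4)) := by decide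
  have c3 : (3 : Fin 4) ∈ ({0, 2, 3} : Finset (Fin 4)) := by decide
  have c1 : (1 : Fin 4) ∈ ({1} : Finset (Fin 4)) := by decide
  have hPair : IndepFun (fun ω => (f ω, T ω)) (X 1) μ := by
    have h := hIndep.indepFun_finset {0, 2, 3} {1} (by decide) hMeas
    have hφ : Measurable (fun r : (({0, 2, 3} : Finset (Fin 4)) → ℕ) =>
        (r ⟨0, c0⟩ / d % 10, (r ⟨0, c0⟩ + r ⟨2, c2⟩ + r ⟨3, c3⟩) % M)) := by
      apply Measurable.prodMk
      · exact (Measurable.of_discrete (f := fun n : ℕ => n / d % 10)).comp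
          (measurable_pi_apply (⟨0, c0⟩ : ({0, 2, 3} : Finset (Fin 4))))
      · exact (Measurable.of_discrete (f := fun n : ℕ => n % M)).comp
          (((measurable_pi_apply (⟨0, c0⟩ : ({0, 2, 3} : Finset (Fin 4)))).add (measurable_pi_apply (⟨2, c2⟩ : ({0, 2, 3} : Finset (Fin 4))))).add
            (measurable_pi_apply (⟨3, c3⟩ : ({0, 2, 3} : Finset (Fin 4)))))
    have hψ : Measurable (fun r : (({1} : Finset (Fin 4)) → ℕ) => r ⟨1, c1⟩) :=
      measurable_pi_apply _
    exact h.comp hφ hψ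
  -- the constant C v
  set Cv : ℕ → ENNReal := fun v =>
    (((Finset.range 1000).filter (fun k => k % M / d = v)).card : ENNReal) * (1 / 1000)
    with hCv
  have hCount : ∀ t v : ℕ, μ {ω | (X 1 ω + t) % M / d = v} = Cv v := by
    intro t v
    have h1 := measure_pred_eq μ (X 1) (hMeas 1) (hVal 1) (hUnif 1)
      (fun k => (k + t) % M / d = v)
    rw [card_shift 1000 M d v t hM0 hMdvd] at h1
    exact h1
  -- fibers of the pair
  have hAmeas : ∀ u t : ℕ, MeasurableSet ((fun ω => (f ω, T ω)) ⁻¹' {(u, t)}) :=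
    fun u t => hPairMeas (measurableSet_singleton _)
  -- key singleton computation
  have key : ∀ u v : ℕ,
      μ ({ω | f ω = u} ∩ {ω | g ω = v}) = μ {ω | f ω = u} * Cv v := by
    intro u v
    have hcover : {ω | f ω = u} ∩ {ω | g ω = v} =
        ⋃ t ∈ Finset.range M, ((fun ω => (f ω, T ω)) ⁻¹' {(u, t)} ∩
          X 1 ⁻¹' {x | (x + t) % M / d = v}) := by
      ext ω
      simp only [Set.mem_inter_iff, Set.mem_setOf_eq, Set.mem_iUnion, Set.mem_preimage,
        Set.mem_singleton_iff, Prod.mk.injEq, Finset.mem_range, exists_prop]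
      constructor
      · rintro ⟨h1, h2⟩
        exact ⟨T ω, Nat.mod_lt _ hM0, ⟨h1, rfl⟩, (hgT ω).symm.trans h2⟩
      · rintro ⟨t, _, ⟨h1, rfl⟩, h3⟩
        exact ⟨h1, (hgT ω).trans h3⟩
    have hdisj : (↑(Finset.range M) : Set ℕ).PairwiseDisjoint
        (fun t => (fun ω => (f ω, T ω)) ⁻¹' {(u, t)} ∩
          X 1 ⁻¹' {x | (x + t) % M / d = v}) := by
      intro a _ b _ hab
      simp only [Function.onFun]
      rw [Set.disjoint_left]
      rintro ω ⟨ha, _⟩ ⟨hb, _⟩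
      simp only [Set.mem_preimage, Set.mem_singleton_iff, Prod.mk.injEq] at ha hb
      exact hab (ha.2.symm.trans hb.2)
    rw [hcover, measure_biUnion_finset hdisj
      (fun t _ => (hAmeas u t).inter ((hMeas 1) MeasurableSet.of_discrete))]
    have hterm : ∀ t ∈ Finset.range M,
        μ ((fun ω => (f ω, T ω)) ⁻¹' {(u, t)} ∩ X 1 ⁻¹' {x | (x + t) % M / d = v})
          = μ ((fun ω => (f ω, T ω)) ⁻¹' {(u, t)}) * Cv v := by
      intro t _
      rw [hPair.measure_inter_preimage_eq_mul _ _ (measurableSet_singleton _)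
        MeasurableSet.of_discrete]
      congr 1
      exact hCount t v
    rw [Finset.sum_congr rfl hterm, ← Finset.sum_mul]
    congr 1
    have hcov2 : {ω | f ω = u} = ⋃ t ∈ Finset.range M, (fun ω => (f ω, T ω)) ⁻¹' {(u, t)} := by
      ext ω
      simp only [Set.mem_setOf_eq, Set.mem_iUnion, Set.mem_preimage, Set.mem_singleton_iff,
        Prod.mk.injEq, Finset.mem_range, exists_prop]
      constructor
      · intro h; exact ⟨T ω, Nat.mod_lt _ hM0, h, rfl⟩
      · rintro ⟨t, _, h, rfl⟩; exact h
    have hdisj2 : (↑(Finset.range M) : Set ℕ).PairwiseDisjoint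
        (fun t => (fun ω => (f ω, T ω)) ⁻¹' {(u, t)}) := by
      intro a _ b _ hab
      simp only [Function.onFun]
      rw [Set.disjoint_left]
      rintro ω ha hb
      simp only [Set.mem_preimage, Set.mem_singleton_iff, Prod.mk.injEq] at ha hb
      exact hab (ha.2.symm.trans hb.2)
    rw [hcov2, measure_biUnion_finset hdisj2 (fun t _ => hAmeas u t)]
  -- marginal of g
  have hfib_meas : ∀ u : ℕ, MeasurableSet {ω | f ω = u} :=
    fun u => hfMeas (measurableSet_singleton u)
  have hgfib_meas : ∀ v : ℕ, MeasurableSet {ω | g ω = v} :=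
    fun v => hgMeas (measurableSet_singleton v)
  have hfdisj : (↑(Finset.range 10) : Set ℕ).PairwiseDisjoint (fun u => {ω | f ω = u}) := by
    intro a _ b _ hab
    simp only [Function.onFun]
    rw [Set.disjoint_left]
    rintro ω ha hb
    exact hab ((show f ω = a from ha).symm.trans (show f ω = b from hb))
  have hfull : ⋃ u ∈ Finset.range 10, {ω | f ω = u} = Set.univ := by
    ext ω
    simp only [Set.mem_iUnion, Set.mem_setOf_eq, Finset.mem_range, exists_prop, Set.mem_univ,
      iff_true]
    exact ⟨f ω, Nat.mod_lt _ (by norm_num), rfl⟩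
  have hone : ∑ u ∈ Finset.range 10, μ {ω | f ω = u} = 1 := by
    rw [← measure_biUnion_finset hfdisj (fun u _ => hfib_meas u), hfull, measure_univ]
  have hgv : ∀ v : ℕ, μ {ω | g ω = v} = Cv v := by
    intro v
    have hcov : {ω | g ω = v} = ⋃ u ∈ Finset.range 10, ({ω | f ω = u} ∩ {ω | g ω = v}) := by
      ext ω
      simp only [Set.mem_setOf_eq, Set.mem_iUnion, Set.mem_inter_iff, Finset.mem_range,
        exists_prop]
      constructor
      · intro h; exact ⟨f ω, Nat.mod_lt _ (by norm_num), rfl, h⟩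
      · rintro ⟨u, _, _, h⟩; exact h
    have hdisj3 : (↑(Finset.range 10) : Set ℕ).PairwiseDisjoint
        (fun u => {ω | f ω = u} ∩ {ω | g ω = v}) := by
      intro a ha b hb hab
      exact (hfdisj ha hb hab).mono Set.inter_subset_left Set.inter_subset_left
    rw [hcov, measure_biUnion_finset hdisj3
      (fun u _ => (hfib_meas u).inter (hgfib_meas v))]
    rw [Finset.sum_congr rfl (fun u _ => key u v), ← Finset.sum_mul, hone, one_mul]
  -- conclude
  rw [indepFun_iff_measure_inter_preimage_eq_mul]
  intro s t _ _
  have hfs : f ⁻¹' s = ⋃ u ∈ (Finset.range 10).filter (· ∈ s), {ω | f ω = u} := by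
    ext ω
    simp only [Set.mem_preimage, Set.mem_iUnion, Set.mem_setOf_eq, Finset.mem_filter,
      Finset.mem_range, exists_prop]
    constructor
    · intro h; exact ⟨f ω, ⟨Nat.mod_lt _ (by norm_num), h⟩, rfl⟩
    · rintro ⟨u, ⟨_, hu⟩, rfl⟩; exact hu
  have hgt : g ⁻¹' t = ⋃ v ∈ (Finset.range 10).filter (· ∈ t), {ω | g ω = v} := by
    ext ω
    simp only [Set.mem_preimage, Set.mem_iUnion, Set.mem_setOf_eq, Finset.mem_filter,
      Finset.mem_range, exists_prop]
    constructor
    · intro h; exact ⟨g ω, ⟨Nat.mod_lt _ (by norm_num), h⟩, rfl⟩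
    · rintro ⟨v, ⟨_, hv⟩, rfl⟩; exact hv
  have hgdisj : (↑((Finset.range 10).filter (· ∈ t)) : Set ℕ).PairwiseDisjoint
      (fun v => {ω | g ω = v}) := by
    intro a _ b _ hab
    simp only [Function.onFun]
    rw [Set.disjoint_left]
    rintro ω ha hb
    exact hab ((show g ω = a from ha).symm.trans (show g ω = b from hb))
  have hfdisj' : (↑((Finset.range 10).filter (· ∈ s)) : Set ℕ).PairwiseDisjoint
      (fun u => {ω | f ω = u}) := by
    intro a _ b _ hab
    simp only [Function.onFun]
    rw [Set.disjoint_left]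
    rintro ω ha hb
    exact hab ((show f ω = a from ha).symm.trans (show f ω = b from hb))
  have hint : f ⁻¹' s ∩ g ⁻¹' t =
      ⋃ p ∈ ((Finset.range 10).filter (· ∈ s)) ×ˢ ((Finset.range 10).filter (· ∈ t)),
        ({ω | f ω = p.1} ∩ {ω | g ω = p.2}) := by
    rw [hfs, hgt]
    ext ω
    simp only [Set.mem_inter_iff, Set.mem_iUnion, Set.mem_setOf_eq, Finset.mem_product,
      exists_prop, Prod.exists]
    constructor
    · rintro ⟨⟨u, hu, hu2⟩, ⟨v, hv, hv2⟩⟩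
      exact ⟨u, v, ⟨hu, hv⟩, hu2, hv2⟩
    · rintro ⟨u, v, ⟨hu, hv⟩, hu2, hv2⟩
      exact ⟨⟨u, hu, hu2⟩, ⟨v, hv, hv2⟩⟩
  have hpdisj : (↑(((Finset.range 10).filter (· ∈ s)) ×ˢ ((Finset.range 10).filter (· ∈ t)))
      : Set (ℕ × ℕ)).PairwiseDisjoint
      (fun p => {ω | f ω = p.1} ∩ {ω | g ω = p.2}) := by
    intro a _ b _ hab
    simp only [Function.onFun]
    rw [Set.disjoint_left]
    rintro ω ⟨ha1, ha2⟩ ⟨hb1, hb2⟩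
    apply hab
    have e1 : a.1 = b.1 := (show f ω = a.1 from ha1).symm.trans (show f ω = b.1 from hb1)
    have e2 : a.2 = b.2 := (show g ω = a.2 from ha2).symm.trans (show g ω = b.2 from hb2)
    exact Prod.ext e1 e2
  rw [hint, measure_biUnion_finset hpdisj
    (fun p _ => (hfib_meas p.1).inter (hgfib_meas p.2))]
  rw [hfs, measure_biUnion_finset hfdisj' (fun u _ => hfib_meas u)]
  rw [hgt, measure_biUnion_finset hgdisj (fun v _ => hgfib_meas v)]
  rw [Finset.sum_mul_sum]
  rw [Finset.sum_product]
  refine Finset.sum_congr rfl (fun u _ => Finset.sum_congr rfl (fun v _ => ?_))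
  rw [key u v, hgv v]
end

section
/- Let A, B, C, D be independent random variables uniformly distributed on {0,1,...,999} and S = A + B + C + D. Let a1 be the hundreds digit of A and e2 the tens digit of S, and let a2 be the tens digit of A and e3 the units digit of S. Then a1 is independent of e2, a1 is independent of e3, and a2 is independent of e3. -/
open MeasureTheory ProbabilityTheory ENNReal


lemma indepFun_of_singletons {Ω α β : Type*} [MeasurableSpace Ω]
    [MeasurableSpace α] [MeasurableSingletonClass α] [Countable α]
    [MeasurableSpace β] [MeasurableSingletonClass β] [Countable β]
    (μ : Measure Ω) (f : Ω → α) (g : Ω → β) (hf : Measurable f) (hg : Measurable g)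
    (h : ∀ a b, μ (f ⁻¹' {a} ∩ g ⁻¹' {b}) = μ (f ⁻¹' {a}) * μ (g ⁻¹' {b})) :
    IndepFun f g μ := by
  rw [indepFun_iff_measure_inter_preimage_eq_mul]
  intro s t hs ht
  have hfs : f ⁻¹' s = ⋃ a : s, f ⁻¹' {(a : α)} := by ext ω; simp
  have hgt : g ⁻¹' t = ⋃ b : t, g ⁻¹' {(b : β)} := by ext ω; simp
  have hdf : Pairwise (Function.onFun Disjoint fun a : s => f ⁻¹' {(a : α)} ∩ g ⁻¹' t) := by
    intro a a' haa'
    refine Set.disjoint_left.2 fun ω hω hω' => haa' ?_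
    exact Subtype.ext (hω.1.symm.trans hω'.1)
  have hinner : ∀ a : α, μ (f ⁻¹' {a} ∩ g ⁻¹' t) = μ (f ⁻¹' {a}) * μ (g ⁻¹' t) := by
    intro a
    have h1 : f ⁻¹' {a} ∩ g ⁻¹' t = ⋃ b : t, f ⁻¹' {a} ∩ g ⁻¹' {(b : β)} := by
      rw [hgt, Set.inter_iUnion]
    rw [h1, measure_iUnion
      (by intro b b' hbb'; refine Set.disjoint_left.2 fun ω hω hω' => hbb' ?_
          exact Subtype.ext (hω.2.symm.trans hω'.2))
      (fun b => (hf (measurableSet_singleton _)).inter (hg (measurableSet_singleton _)))]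
    simp_rw [h a]
    rw [ENNReal.tsum_mul_left]
    congr 1
    rw [hgt, measure_iUnion
      (by intro b b' hbb'; refine Set.disjoint_left.2 fun ω hω hω' => hbb' ?_
          exact Subtype.ext (hω.symm.trans hω'))
      (fun b => hg (measurableSet_singleton _))]
  have h2 : f ⁻¹' s ∩ g ⁻¹' t = ⋃ a : s, f ⁻¹' {(a : α)} ∩ g ⁻¹' t := by
    rw [hfs, Set.iUnion_inter]
  rw [h2, measure_iUnion hdf (fun a => (hf (measurableSet_singleton _)).inter (hg ht))]
  simp_rw [hinner]
  rw [ENNReal.tsum_mul_right]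
  congr 1
  rw [hfs, measure_iUnion
    (by intro a a' haa'; refine Set.disjoint_left.2 fun ω hω hω' => haa' ?_
        exact Subtype.ext (hω.symm.trans hω'))
    (fun a => hf (measurableSet_singleton _))]

lemma key_div_mod_indep {Ω : Type*} [MeasurableSpace Ω] (μ : Measure Ω) [IsProbabilityMeasure μ]
    (X : Fin 4 → Ω → ℕ)
    (hIndep : iIndepFun X μ)
    (hMeas : ∀ i, Measurable (X i))
    (hVal : ∀ i ω, X i ω < 1000)
    (hUnif : ∀ i, ∀ k : ℕ, k < 1000 → μ {ω | X i ω = k} = 1 / 1000)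
    (d e : ℕ) (hd : 0 < d) (hde : d * e = 1000) :
    IndepFun (fun ω => X 0 ω / d) (fun ω => (X 0 ω % d, X 1 ω, X 2 ω, X 3 ω)) μ := by
  have hsingle : ∀ k : ℕ, k < 1000 → μ (X 0 ⁻¹' {k}) = (1000 : ℝ≥0∞)⁻¹ := by
    intro k hk
    have := hUnif 0 k hk
    rw [one_div] at this
    exact this
  have hjoint : ∀ B : Fin 4 → Set ℕ, μ (⋂ i, X i ⁻¹' B i) =
      μ (X 0 ⁻¹' B 0) * (μ (X 1 ⁻¹' B 1) * (μ (X 2 ⁻¹' B 2) * μ (X 3 ⁻¹' B 3))) := by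
    intro B
    have h4 := (iIndepFun_iff_measure_inter_preimage_eq_mul.mp hIndep) Finset.univ
      (sets := B) (fun i _ => trivial)
    have e1 : (⋂ i ∈ Finset.univ, X i ⁻¹' B i) = ⋂ i, X i ⁻¹' B i := by simp
    rw [e1] at h4
    rw [h4, Fin.prod_univ_four]
    ring
  -- measure of a div event
  have hq : ∀ q : ℕ, q < e → μ (X 0 ⁻¹' {n | n / d = q}) = (d : ℝ≥0∞) * 1000⁻¹ := by
    intro q hqe
    have hset : X 0 ⁻¹' {n | n / d = q} = ⋃ r' ∈ Finset.range d, X 0 ⁻¹' {d * q + r'} := by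
      ext ω
      simp only [Set.mem_preimage, Set.mem_setOf_eq, Set.mem_iUnion, Finset.mem_range,
        Set.mem_singleton_iff]
      constructor
      · intro h
        refine ⟨X 0 ω % d, Nat.mod_lt _ hd, ?_⟩
        conv_lhs => rw [← Nat.div_add_mod (X 0 ω) d, h]
      · rintro ⟨r', hr', h⟩
        rw [h, Nat.mul_add_div hd, Nat.div_eq_of_lt hr', add_zero]
    rw [hset, measure_biUnion_finset]
    · have : ∀ r' ∈ Finset.range d, μ (X 0 ⁻¹' {d * q + r'}) = (1000 : ℝ≥0∞)⁻¹ := by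
        intro r' hr'
        apply hsingle
        have : d * q + r' < d * (q + 1) := by
          rw [Nat.mul_add, Nat.mul_one]
          exact Nat.add_lt_add_left (Finset.mem_range.mp hr') _
        calc d * q + r' < d * (q + 1) := this
          _ ≤ d * e := Nat.mul_le_mul_left d hqe
          _ = 1000 := hde
      rw [Finset.sum_congr rfl this, Finset.sum_const, Finset.card_range, nsmul_eq_mul]
    · intro r' _ r'' _ hne
      refine Set.disjoint_left.2 fun ω h1 h2 => hne ?_
      have := h1.symm.trans h2
      omega
    · exact fun _ _ => hMeas 0 (measurableSet_singleton _)
  -- measure of a mod event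
  have hr : ∀ r : ℕ, r < d → μ (X 0 ⁻¹' {n | n % d = r}) = (e : ℝ≥0∞) * 1000⁻¹ := by
    intro r hrd
    have hset : X 0 ⁻¹' {n | n % d = r} = ⋃ q' ∈ Finset.range e, X 0 ⁻¹' {d * q' + r} := by
      ext ω
      simp only [Set.mem_preimage, Set.mem_setOf_eq, Set.mem_iUnion, Finset.mem_range,
        Set.mem_singleton_iff]
      constructor
      · intro h
        refine ⟨X 0 ω / d, ?_, ?_⟩
        · have h1 : d * (X 0 ω / d) ≤ X 0 ω := Nat.mul_div_le _ _
          have h2 : X 0 ω < d * e := by rw [hde]; exact hVal 0 ω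
          exact Nat.lt_of_mul_lt_mul_left (lt_of_le_of_lt h1 h2)
        · conv_lhs => rw [← Nat.div_add_mod (X 0 ω) d, h]
      · rintro ⟨q', _, h⟩
        rw [h, Nat.mul_add_mod, Nat.mod_eq_of_lt hrd]
    rw [hset, measure_biUnion_finset]
    · have : ∀ q' ∈ Finset.range e, μ (X 0 ⁻¹' {d * q' + r}) = (1000 : ℝ≥0∞)⁻¹ := by
        intro q' hq'
        apply hsingle
        have : d * q' + r < d * (q' + 1) := by
          rw [Nat.mul_add, Nat.mul_one]
          exact Nat.add_lt_add_left hrd _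
        calc d * q' + r < d * (q' + 1) := this
          _ ≤ d * e := Nat.mul_le_mul_left d (Finset.mem_range.mp hq')
          _ = 1000 := hde
      rw [Finset.sum_congr rfl this, Finset.sum_const, Finset.card_range, nsmul_eq_mul]
    · intro q' _ q'' _ hne
      refine Set.disjoint_left.2 fun ω h1 h2 => hne ?_
      have := h1.symm.trans h2
      have hd' : d ≠ 0 := hd.ne'
      exact Nat.eq_of_mul_eq_mul_left hd (by omega)
    · exact fun _ _ => hMeas 0 (measurableSet_singleton _)
  -- joint div-mod event
  have hqr : ∀ q r : ℕ, q < e → r < d →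
      μ (X 0 ⁻¹' ({n | n / d = q ∧ n % d = r})) = (1000 : ℝ≥0∞)⁻¹ := by
    intro q r hqe hrd
    have hset : ({n | n / d = q ∧ n % d = r} : Set ℕ) = {d * q + r} := by
      ext n
      simp only [Set.mem_setOf_eq, Set.mem_singleton_iff]
      constructor
      · rintro ⟨h1, h2⟩
        conv_lhs => rw [← Nat.div_add_mod n d, h1, h2]
      · rintro rfl
        constructor
        · rw [Nat.mul_add_div hd, Nat.div_eq_of_lt hrd, add_zero]
        · rw [Nat.mul_add_mod, Nat.mod_eq_of_lt hrd]
    rw [hset]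
    apply hsingle
    have : d * q + r < d * (q + 1) := by
      rw [Nat.mul_add, Nat.mul_one]
      exact Nat.add_lt_add_left hrd _
    calc d * q + r < d * (q + 1) := this
      _ ≤ d * e := Nat.mul_le_mul_left d hqe
      _ = 1000 := hde
  -- now the independence
  refine indepFun_of_singletons μ (fun ω => X 0 ω / d)
    (fun ω => (X 0 ω % d, X 1 ω, X 2 ω, X 3 ω)) ?_ ?_ ?_
  · exact (measurable_of_countable (· / d)).comp (hMeas 0)
  · exact (((measurable_of_countable (· % d)).comp (hMeas 0)).prodMk
      ((hMeas 1).prodMk ((hMeas 2).prodMk (hMeas 3))))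
  rintro q ⟨r, b, c, e'⟩
  by_cases hrd : r < d
  · by_cases hqe : q < e
    · have Eq1 : (fun ω => X 0 ω / d) ⁻¹' {q} ∩
          (fun ω => (X 0 ω % d, X 1 ω, X 2 ω, X 3 ω)) ⁻¹' {(r, b, c, e')} =
          ⋂ i, X i ⁻¹' (![{n | n / d = q ∧ n % d = r}, {b}, {c}, {e'}] i) := by
        ext ω
        simp [Fin.forall_fin_succ, Prod.ext_iff]
        tauto
      have Eq2 : (fun ω => (X 0 ω % d, X 1 ω, X 2 ω, X 3 ω)) ⁻¹' {(r, b, c, e')} =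
          ⋂ i, X i ⁻¹' (![{n | n % d = r}, {b}, {c}, {e'}] i) := by
        ext ω
        simp [Fin.forall_fin_succ, Prod.ext_iff]
      have Eq3 : (fun ω => X 0 ω / d) ⁻¹' {q} = X 0 ⁻¹' {n | n / d = q} := rfl
      rw [Eq1, Eq2, hjoint, hjoint, Eq3]
      simp only [Matrix.cons_val_zero, Matrix.cons_val_one, Matrix.head_cons,
        Matrix.cons_val_two, Matrix.tail_cons, Matrix.cons_val_three]
      rw [hqr q r hqe hrd, hq q hqe, hr r hrd]
      have hmain : (d : ℝ≥0∞) * 1000⁻¹ * ((e : ℝ≥0∞) * 1000⁻¹) = 1000⁻¹ := by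
        rw [mul_mul_mul_comm, ← Nat.cast_mul, hde]
        rw [show ((1000 : ℕ) : ℝ≥0∞) = 1000 by norm_num]
        rw [← mul_assoc, ENNReal.mul_inv_cancel (by norm_num) (by norm_num), one_mul]
      rw [show (d : ℝ≥0∞) * 1000⁻¹ * ((e : ℝ≥0∞) * 1000⁻¹ *
          (μ (X 1 ⁻¹' {b}) * (μ (X 2 ⁻¹' {c}) * μ (X 3 ⁻¹' {e'})))) =
          ((d : ℝ≥0∞) * 1000⁻¹ * ((e : ℝ≥0∞) * 1000⁻¹)) *
          (μ (X 1 ⁻¹' {b}) * (μ (X 2 ⁻¹' {c}) * μ (X 3 ⁻¹' {e'}))) from by ring, hmain]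
    · have hempty : (fun ω => X 0 ω / d) ⁻¹' {q} = ∅ := by
        ext ω
        simp only [Set.mem_preimage, Set.mem_singleton_iff, Set.mem_empty_iff_false,
          iff_false]
        intro h
        have h1 : d * q ≤ X 0 ω := by rw [← h]; exact Nat.mul_div_le _ _
        have h2 : X 0 ω < d * e := by rw [hde]; exact hVal 0 ω
        have : d * q < d * e := lt_of_le_of_lt h1 h2
        exact hqe (Nat.lt_of_mul_lt_mul_left this)
      rw [hempty]
      simp
  · have hempty : (fun ω => (X 0 ω % d, X 1 ω, X 2 ω, X 3 ω)) ⁻¹' {(r, b, c, e')} = ∅ := by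
      ext ω
      simp only [Set.mem_preimage, Set.mem_singleton_iff, Set.mem_empty_iff_false, iff_false,
        Prod.ext_iff]
      rintro ⟨h1, -⟩
      exact hrd (h1 ▸ Nat.mod_lt _ hd)
    rw [hempty]
    simp

/-- For `A, B, C, D` independent uniform on `{0,...,999}` and `S = A+B+C+D`:
the hundreds digit `a1` of `A` is independent of the tens digit `e2` of `S`,
`a1` is independent of the units digit `e3` of `S`, and the tens digit `a2` of `A`
is independent of `e3`. -/
theorem higher_digit_indep_lower_digit_of_sum
    {Ω : Type*} [MeasurableSpace Ω] (μ : Measure Ω) [IsProbabilityMeasure μ]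
    (X : Fin 4 → Ω → ℕ)
    (hIndep : iIndepFun X μ)
    (hMeas : ∀ i, Measurable (X i))
    (hVal : ∀ i ω, X i ω < 1000)
    (hUnif : ∀ i, ∀ k : ℕ, k < 1000 → μ {ω | X i ω = k} = 1 / 1000) :
    IndepFun (fun ω => X 0 ω / 100 % 10)
        (fun ω => (X 0 ω + X 1 ω + X 2 ω + X 3 ω) / 10 % 10) μ
      ∧ IndepFun (fun ω => X 0 ω / 100 % 10)
          (fun ω => (X 0 ω + X 1 ω + X 2 ω + X 3 ω) % 10) μ
      ∧ IndepFun (fun ω => X 0 ω / 10 % 10)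
          (fun ω => (X 0 ω + X 1 ω + X 2 ω + X 3 ω) % 10) μ := by
  have h100 := key_div_mod_indep μ X hIndep hMeas hVal hUnif 100 10 (by norm_num) (by norm_num)
  have h10 := key_div_mod_indep μ X hIndep hMeas hVal hUnif 10 100 (by norm_num) (by norm_num)
  refine ⟨?_, ?_, ?_⟩
  · have h := h100.comp (φ := fun n => n % 10)
      (ψ := fun p : ℕ × ℕ × ℕ × ℕ => (p.1 + p.2.1 + p.2.2.1 + p.2.2.2) / 10 % 10)
      (measurable_of_countable _) (measurable_of_countable _)
    have heq : ((fun p : ℕ × ℕ × ℕ × ℕ => (p.1 + p.2.1 + p.2.2.1 + p.2.2.2) / 10 % 10) ∘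
        (fun ω => (X 0 ω % 100, X 1 ω, X 2 ω, X 3 ω))) =
        fun ω => (X 0 ω + X 1 ω + X 2 ω + X 3 ω) / 10 % 10 := by
      funext ω
      simp only [Function.comp_apply]
      omega
    rw [heq] at h
    exact h
  · have h := h100.comp (φ := fun n => n % 10)
      (ψ := fun p : ℕ × ℕ × ℕ × ℕ => (p.1 + p.2.1 + p.2.2.1 + p.2.2.2) % 10)
      (measurable_of_countable _) (measurable_of_countable _)
    have heq : ((fun p : ℕ × ℕ × ℕ × ℕ => (p.1 + p.2.1 + p.2.2.1 + p.2.2.2) % 10) ∘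
        (fun ω => (X 0 ω % 100, X 1 ω, X 2 ω, X 3 ω))) =
        fun ω => (X 0 ω + X 1 ω + X 2 ω + X 3 ω) % 10 := by
      funext ω
      simp only [Function.comp_apply]
      omega
    rw [heq] at h
    exact h
  · have h := h10.comp (φ := fun n => n % 10)
      (ψ := fun p : ℕ × ℕ × ℕ × ℕ => (p.1 + p.2.1 + p.2.2.1 + p.2.2.2) % 10)
      (measurable_of_countable _) (measurable_of_countable _)
    have heq : ((fun p : ℕ × ℕ × ℕ × ℕ => (p.1 + p.2.1 + p.2.2.1 + p.2.2.2) % 10) ∘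
        (fun ω => (X 0 ω % 10, X 1 ω, X 2 ω, X 3 ω))) =
        fun ω => (X 0 ω + X 1 ω + X 2 ω + X 3 ω) % 10 := by
      funext ω
      simp only [Function.comp_apply]
      omega
    rw [heq] at h
    exact h
end

section
/- Let A, B, C, D be independent uniform on {0,...,999}, S = A+B+C+D. Let a1 = (A/100) mod 10 be the hundreds digit of A, e1 = (S/100) mod 10 the hundreds digit of S, and K the carry out of the hundreds column, K = floor((a1+b1+c1+d1+C_in)/10) where b1, c1, d1 are hundreds digits of B, C, D and C_in is the carry into the hundreds column. Then a1 and e1 are independent unconditionally, but they are not conditionally independent given K. -/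
open MeasureTheory ProbabilityTheory
open scoped ENNReal

namespace HundredsAux

variable {Ω : Type*} [MeasurableSpace Ω] {μ : Measure Ω}

lemma meas_pair {α : Type*} [MeasurableSpace α] [MeasurableSingletonClass α]
    {Z : Ω → ℕ} {Y : Ω → α} (hZ : Measurable Z) (hY : Measurable Y) (x : ℕ) (a : α) :
    MeasurableSet {ω | Z ω = x ∧ Y ω = a} := by
  have : {ω | Z ω = x ∧ Y ω = a} = (fun ω => (Z ω, Y ω)) ⁻¹' {(x, a)} := by
    ext ω; simp [Prod.ext_iff]
  rw [this]
  exact (hZ.prodMk hY) (measurableSet_singleton _)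

lemma tsum_meas_eq {α : Type*} [MeasurableSpace α] [MeasurableSingletonClass α] [Countable α]
    {Y : Ω → α} (hY : Measurable Y) :
    ∑' a : α, μ {ω | Y ω = a} = μ Set.univ := by
  have h1 : (Set.univ : Set Ω) = ⋃ a : α, {ω | Y ω = a} := by
    ext ω; simp
  rw [h1, measure_iUnion]
  · intro a b hab
    exact Set.disjoint_left.mpr fun ω ha hb => hab (ha.symm.trans hb)
  · exact fun a => hY (measurableSet_singleton a)

lemma split {α : Type*} [MeasurableSpace α] [MeasurableSingletonClass α] [Countable α]
    {Z : Ω → ℕ} {Y : Ω → α} (hZ : Measurable Z) (hY : Measurable Y) (x : ℕ)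
    (h : ∀ a, μ {ω | Z ω = x ∧ Y ω = a} = 1/10 * μ {ω | Y ω = a})
    (p : α → Prop) :
    μ {ω | Z ω = x ∧ p (Y ω)} = 1/10 * μ {ω | p (Y ω)} := by
  classical
  have e1 : {ω | Z ω = x ∧ p (Y ω)} = ⋃ a : {a : α // p a}, {ω | Z ω = x ∧ Y ω = (a : α)} := by
    ext ω
    simp only [Set.mem_iUnion, Set.mem_setOf_eq]
    constructor
    · rintro ⟨hz, hp⟩; exact ⟨⟨Y ω, hp⟩, hz, rfl⟩
    · rintro ⟨a, hz, hy⟩; exact ⟨hz, hy ▸ a.2⟩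
  have e2 : {ω | p (Y ω)} = ⋃ a : {a : α // p a}, {ω | Y ω = (a : α)} := by
    ext ω
    simp only [Set.mem_iUnion, Set.mem_setOf_eq]
    exact ⟨fun hp => ⟨⟨Y ω, hp⟩, rfl⟩, fun ⟨a, hy⟩ => hy ▸ a.2⟩
  rw [e1, e2, measure_iUnion, measure_iUnion, ← ENNReal.tsum_mul_left]
  · exact tsum_congr fun a => h a
  · intro a b hab
    exact Set.disjoint_left.mpr fun ω ha hb =>
      hab (Subtype.ext (ha.symm.trans hb))
  · exact fun a => hY (measurableSet_singleton _)
  · intro a b hab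
    exact Set.disjoint_left.mpr fun ω ha hb =>
      hab (Subtype.ext (ha.2.symm.trans hb.2))
  · exact fun a => meas_pair hZ hY x _

lemma unif_shift {α : Type*} [MeasurableSpace α] [MeasurableSingletonClass α] [Countable α]
    [IsProbabilityMeasure μ]
    {Z : Ω → ℕ} {Y : Ω → α} (hZ : Measurable Z) (hY : Measurable Y)
    (hZlt : ∀ ω, Z ω < 10)
    (h : ∀ x, x < 10 → ∀ a, μ {ω | Z ω = x ∧ Y ω = a} = 1/10 * μ {ω | Y ω = a})
    (g : α → ℕ) (c : ℕ) (hc : c < 10) :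
    μ {ω | (Z ω + g (Y ω)) % 10 = c} = 1/10 := by
  have e1 : {ω | (Z ω + g (Y ω)) % 10 = c}
      = ⋃ a : α, {ω | Z ω = (c + 10 - g a % 10) % 10 ∧ Y ω = a} := by
    ext ω
    simp only [Set.mem_iUnion, Set.mem_setOf_eq]
    constructor
    · intro hω
      refine ⟨Y ω, ?_, rfl⟩
      have := hZlt ω; omega
    · rintro ⟨a, hz, hy⟩
      subst hy
      have := hZlt ω; omega
  rw [e1, measure_iUnion]
  · have : ∀ a : α, μ {ω | Z ω = (c + 10 - g a % 10) % 10 ∧ Y ω = a}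
        = 1/10 * μ {ω | Y ω = a} :=
      fun a => h _ (Nat.mod_lt _ (by norm_num)) a
    rw [tsum_congr this, ENNReal.tsum_mul_left, tsum_meas_eq hY, measure_univ, mul_one]
  · intro a b hab
    exact Set.disjoint_left.mpr fun ω ha hb => hab (ha.2.symm.trans hb.2)
  · exact fun a => meas_pair hZ hY _ _

lemma base {A B C D : Ω → ℕ} (hA : Measurable A)
    (hBCD : Measurable fun ω => (B ω, C ω, D ω))
    (hAval : ∀ ω, A ω < 1000)
    (hprod : ∀ (k : ℕ) (v : ℕ × ℕ × ℕ),
      μ {ω | A ω = k ∧ (B ω, C ω, D ω) = v}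
        = (if k < 1000 then (1/1000 : ℝ≥0∞) else 0) * μ {ω | (B ω, C ω, D ω) = v}) :
    ∀ x, x < 10 → ∀ a : ℕ × ℕ × ℕ × ℕ,
      μ {ω | A ω / 100 = x ∧ (A ω % 100, B ω, C ω, D ω) = a}
        = 1/10 * μ {ω | (A ω % 100, B ω, C ω, D ω) = a} := by
  rintro x hx ⟨l, v⟩
  by_cases hl : l < 100
  · have e1 : {ω | A ω / 100 = x ∧ (A ω % 100, B ω, C ω, D ω) = (l, v)}
        = {ω | A ω = 100 * x + l ∧ (B ω, C ω, D ω) = v} := by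
      ext ω
      simp only [Set.mem_setOf_eq, Prod.mk.injEq]
      constructor
      · rintro ⟨h1, h2, h3⟩; exact ⟨by omega, h3⟩
      · rintro ⟨h1, h2⟩; exact ⟨by omega, by omega, h2⟩
    have e2 : {ω | (A ω % 100, B ω, C ω, D ω) = (l, v)}
        = ⋃ x' : Fin 10, {ω | A ω = 100 * (x' : ℕ) + l ∧ (B ω, C ω, D ω) = v} := by
      ext ω
      simp only [Set.mem_iUnion, Set.mem_setOf_eq, Prod.mk.injEq]
      constructor
      · rintro ⟨h1, h2⟩
        refine ⟨⟨A ω / 100, by have := hAval ω; omega⟩, ?_, h2⟩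
        simp only [Fin.val_mk]
        omega
      · rintro ⟨x', h1, h2⟩; exact ⟨by omega, h2⟩
    rw [e1, e2, hprod, measure_iUnion]
    · have : ∀ x' : Fin 10, μ {ω | A ω = 100 * (x' : ℕ) + l ∧ (B ω, C ω, D ω) = v}
          = 1/1000 * μ {ω | (B ω, C ω, D ω) = v} := by
        intro x'
        rw [hprod, if_pos (by omega)]
      rw [tsum_congr this, tsum_fintype, Finset.sum_const, Finset.card_univ, Fintype.card_fin,
        if_pos (by omega), nsmul_eq_mul, ← mul_assoc]
      norm_num
      rw [ENNReal.inv_mul_cancel (by norm_num) (by norm_num), one_mul]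
    · intro a b hab
      apply Set.disjoint_left.mpr
      rintro ω ⟨ha1, -⟩ ⟨hb1, -⟩
      exact hab (Fin.ext (by omega))
    · exact fun a => meas_pair hA hBCD _ _
  · have e1 : {ω | A ω / 100 = x ∧ (A ω % 100, B ω, C ω, D ω) = (l, v)} = ∅ := by
      ext ω
      simp only [Set.mem_setOf_eq, Prod.mk.injEq, Set.mem_empty_iff_false, iff_false, not_and]
      intro _ h1
      omega
    have e2 : {ω | (A ω % 100, B ω, C ω, D ω) = (l, v)} = ∅ := by
      ext ω
      simp only [Set.mem_setOf_eq, Prod.mk.injEq, Set.mem_empty_iff_false, iff_false, not_and]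
      intro h1
      omega
    rw [e1, e2, measure_empty, mul_zero]

end HundredsAux


open MeasureTheory ProbabilityTheory
open scoped ENNReal

set_option maxHeartbeats 4000000 in
/-- For `A, B, C, D` independent uniform on `{0,...,999}`, `S = A+B+C+D`: the hundreds
digit `a1` of `A` and the hundreds digit `e1` of `S` are independent unconditionally,
but are not conditionally independent given the carry `K` out of the hundreds column. -/
theorem hundreds_digits_indep_but_not_given_carry
    {Ω : Type*} [MeasurableSpace Ω] (μ : Measure Ω) [IsProbabilityMeasure μ]
    (X : Fin 4 → Ω → ℕ)
    (hIndep : iIndepFun X μ)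
    (hMeas : ∀ i, Measurable (X i))
    (hVal : ∀ i ω, X i ω < 1000)
    (hUnif : ∀ i, ∀ k : ℕ, k < 1000 → μ {ω | X i ω = k} = 1 / 1000) :
    IndepFun (fun ω => X 0 ω / 100 % 10)
        (fun ω => (X 0 ω + X 1 ω + X 2 ω + X 3 ω) / 100 % 10) μ
      ∧ ¬ ∀ k x y : ℕ,
          μ[|{ω | (X 0 ω / 100 % 10 + X 1 ω / 100 % 10 + X 2 ω / 100 % 10
              + X 3 ω / 100 % 10
              + (X 0 ω % 100 + X 1 ω % 100 + X 2 ω % 100 + X 3 ω % 100) / 100) / 10 = k}]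
            {ω | X 0 ω / 100 % 10 = x ∧ (X 0 ω + X 1 ω + X 2 ω + X 3 ω) / 100 % 10 = y}
          = μ[|{ω | (X 0 ω / 100 % 10 + X 1 ω / 100 % 10 + X 2 ω / 100 % 10
              + X 3 ω / 100 % 10
              + (X 0 ω % 100 + X 1 ω % 100 + X 2 ω % 100 + X 3 ω % 100) / 100) / 10 = k}]
              {ω | X 0 ω / 100 % 10 = x}
            * μ[|{ω | (X 0 ω / 100 % 10 + X 1 ω / 100 % 10 + X 2 ω / 100 % 10
                + X 3 ω / 100 % 10
                + (X 0 ω % 100 + X 1 ω % 100 + X 2 ω % 100 + X 3 ω % 100) / 100) / 10 = k}]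
                {ω | (X 0 ω + X 1 ω + X 2 ω + X 3 ω) / 100 % 10 = y} := by
  classical
  -- single-point probabilities
  have hq : ∀ (i : Fin 4) (k : ℕ),
      μ {ω | X i ω = k} = (if k < 1000 then (1/1000 : ℝ≥0∞) else 0) := by
    intro i k
    split_ifs with h
    · exact hUnif i k h
    · have e : {ω | X i ω = k} = ∅ := by
        ext ω
        simp only [Set.mem_setOf_eq, Set.mem_empty_iff_false, iff_false]
        intro hk
        exact h (hk ▸ hVal i ω)
      rw [e, measure_empty]
  have h3 : ∀ (S : Finset (Fin 4)) (k : Fin 4 → ℕ),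
      μ (⋂ i ∈ S, X i ⁻¹' {k i}) = ∏ i ∈ S, (if k i < 1000 then (1/1000 : ℝ≥0∞) else 0) := by
    intro S k
    rw [hIndep.measure_inter_preimage_eq_mul S (sets := fun i => {k i})
      (fun i _ => measurableSet_singleton _)]
    exact Finset.prod_congr rfl fun i _ => hq i (k i)
  -- 4-fold joint, coordinate 0 split off
  have h40 : ∀ (k : ℕ) (v : ℕ × ℕ × ℕ),
      μ {ω | X 0 ω = k ∧ (X 1 ω, X 2 ω, X 3 ω) = v}
        = (if k < 1000 then (1/1000 : ℝ≥0∞) else 0)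
          * ((if v.1 < 1000 then (1/1000 : ℝ≥0∞) else 0)
            * ((if v.2.1 < 1000 then (1/1000 : ℝ≥0∞) else 0)
              * (if v.2.2 < 1000 then (1/1000 : ℝ≥0∞) else 0))) := by
    rintro k ⟨v1, v2, v3⟩
    have e : {ω | X 0 ω = k ∧ (X 1 ω, X 2 ω, X 3 ω) = (v1, v2, v3)}
        = ⋂ i ∈ Finset.univ, X i ⁻¹' {(![k, v1, v2, v3]) i} := by
      ext ω
      simp only [Set.mem_iInter, Set.mem_preimage, Set.mem_singleton_iff, Finset.mem_univ,
        forall_true_left, Set.mem_setOf_eq, Prod.mk.injEq]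
      constructor
      · rintro ⟨h0, h1, h2, h3'⟩ i
        fin_cases i
        · exact h0
        · exact h1
        · exact h2
        · exact h3'
      · intro h
        exact ⟨h 0, h 1, h 2, h 3⟩
    rw [e, h3, Fin.prod_univ_four]
    simp only [Matrix.cons_val_zero, Matrix.cons_val_one, Matrix.head_cons,
      Matrix.cons_val_two, Matrix.tail_cons, Matrix.cons_val_three]
    by_cases hk : k < 1000 <;> by_cases hv1 : v1 < 1000 <;> by_cases hv2 : v2 < 1000 <;>
      by_cases hv3 : v3 < 1000 <;> simp only [hk, hv1, hv2, hv3, if_true, if_false] <;> ring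
  have h3t : ∀ (v : ℕ × ℕ × ℕ),
      μ {ω | (X 1 ω, X 2 ω, X 3 ω) = v}
        = (if v.1 < 1000 then (1/1000 : ℝ≥0∞) else 0)
          * ((if v.2.1 < 1000 then (1/1000 : ℝ≥0∞) else 0)
            * (if v.2.2 < 1000 then (1/1000 : ℝ≥0∞) else 0)) := by
    rintro ⟨v1, v2, v3⟩
    have e : {ω | (X 1 ω, X 2 ω, X 3 ω) = (v1, v2, v3)}
        = ⋂ i ∈ ({1, 2, 3} : Finset (Fin 4)), X i ⁻¹' {(![0, v1, v2, v3]) i} := by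
      ext ω
      simp only [Set.mem_iInter, Set.mem_preimage, Set.mem_singleton_iff, Finset.mem_insert,
        Finset.mem_singleton, Set.mem_setOf_eq, Prod.mk.injEq]
      constructor
      · rintro ⟨h1, h2, h3'⟩ i hi
        rcases hi with h | h | h <;> subst h
        · exact h1
        · exact h2
        · exact h3'
      · intro h
        exact ⟨h 1 (by decide), h 2 (by decide), h 3 (by decide)⟩
    rw [e, h3, show ({1, 2, 3} : Finset (Fin 4)) = insert 1 (insert 2 {3}) from rfl,
      Finset.prod_insert (by decide), Finset.prod_insert (by decide), Finset.prod_singleton]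
    simp only [Matrix.cons_val_one, Matrix.head_cons, Matrix.cons_val_two, Matrix.tail_cons,
      Matrix.cons_val_three, Matrix.cons_val_zero]
    rfl
  -- 4-fold joint, coordinate 1 split off
  have h41 : ∀ (k : ℕ) (v : ℕ × ℕ × ℕ),
      μ {ω | X 1 ω = k ∧ (X 0 ω, X 2 ω, X 3 ω) = v}
        = (if k < 1000 then (1/1000 : ℝ≥0∞) else 0)
          * ((if v.1 < 1000 then (1/1000 : ℝ≥0∞) else 0)
            * ((if v.2.1 < 1000 then (1/1000 : ℝ≥0∞) else 0)
              * (if v.2.2 < 1000 then (1/1000 : ℝ≥0∞) else 0))) := by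
    rintro k ⟨v1, v2, v3⟩
    have e : {ω | X 1 ω = k ∧ (X 0 ω, X 2 ω, X 3 ω) = (v1, v2, v3)}
        = ⋂ i ∈ Finset.univ, X i ⁻¹' {(![v1, k, v2, v3]) i} := by
      ext ω
      simp only [Set.mem_iInter, Set.mem_preimage, Set.mem_singleton_iff, Finset.mem_univ,
        forall_true_left, Set.mem_setOf_eq, Prod.mk.injEq]
      constructor
      · rintro ⟨h0, h1, h2, h3'⟩ i
        fin_cases i
        · exact h1
        · exact h0
        · exact h2
        · exact h3'
      · intro h
        exact ⟨h 1, h 0, h 2, h 3⟩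
    rw [e, h3, Fin.prod_univ_four]
    simp only [Matrix.cons_val_zero, Matrix.cons_val_one, Matrix.head_cons,
      Matrix.cons_val_two, Matrix.tail_cons, Matrix.cons_val_three]
    by_cases hk : k < 1000 <;> by_cases hv1 : v1 < 1000 <;> by_cases hv2 : v2 < 1000 <;>
      by_cases hv3 : v3 < 1000 <;> simp only [hk, hv1, hv2, hv3, if_true, if_false] <;> ring
  have h3t' : ∀ (v : ℕ × ℕ × ℕ),
      μ {ω | (X 0 ω, X 2 ω, X 3 ω) = v}
        = (if v.1 < 1000 then (1/1000 : ℝ≥0∞) else 0)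
          * ((if v.2.1 < 1000 then (1/1000 : ℝ≥0∞) else 0)
            * (if v.2.2 < 1000 then (1/1000 : ℝ≥0∞) else 0)) := by
    rintro ⟨v1, v2, v3⟩
    have e : {ω | (X 0 ω, X 2 ω, X 3 ω) = (v1, v2, v3)}
        = ⋂ i ∈ ({0, 2, 3} : Finset (Fin 4)), X i ⁻¹' {(![v1, 0, v2, v3]) i} := by
      ext ω
      simp only [Set.mem_iInter, Set.mem_preimage, Set.mem_singleton_iff, Finset.mem_insert,
        Finset.mem_singleton, Set.mem_setOf_eq, Prod.mk.injEq]
      constructor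
      · rintro ⟨h1, h2, h3'⟩ i hi
        rcases hi with h | h | h <;> subst h
        · exact h1
        · exact h2
        · exact h3'
      · intro h
        exact ⟨h 0 (by decide), h 2 (by decide), h 3 (by decide)⟩
    rw [e, h3, show ({0, 2, 3} : Finset (Fin 4)) = insert 0 (insert 2 {3}) from rfl,
      Finset.prod_insert (by decide), Finset.prod_insert (by decide), Finset.prod_singleton]
    simp only [Matrix.cons_val_zero, Matrix.cons_val_two, Matrix.tail_cons,
      Matrix.cons_val_three, Matrix.cons_val_one, Matrix.head_cons]
    rfl
  have hprod0 : ∀ (k : ℕ) (v : ℕ × ℕ × ℕ),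
      μ {ω | X 0 ω = k ∧ (X 1 ω, X 2 ω, X 3 ω) = v}
        = (if k < 1000 then (1/1000 : ℝ≥0∞) else 0) * μ {ω | (X 1 ω, X 2 ω, X 3 ω) = v} := by
    intro k v
    rw [h40, h3t]
  have hprod1 : ∀ (k : ℕ) (v : ℕ × ℕ × ℕ),
      μ {ω | X 1 ω = k ∧ (X 0 ω, X 2 ω, X 3 ω) = v}
        = (if k < 1000 then (1/1000 : ℝ≥0∞) else 0) * μ {ω | (X 0 ω, X 2 ω, X 3 ω) = v} := by
    intro k v
    rw [h41, h3t']
  -- measurability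
  have mnat : ∀ {β : Type} [MeasurableSpace β] (f : ℕ → β)
      , True := fun _ => trivial
  have mZ0 : Measurable fun ω => X 0 ω / 100 :=
    (measurable_of_countable (fun n : ℕ => n / 100)).comp (hMeas 0)
  have mZ1 : Measurable fun ω => X 1 ω / 100 :=
    (measurable_of_countable (fun n : ℕ => n / 100)).comp (hMeas 1)
  have mY0 : Measurable fun ω => (X 0 ω % 100, X 1 ω, X 2 ω, X 3 ω) :=
    ((measurable_of_countable (fun n : ℕ => n % 100)).comp (hMeas 0)).prodMk
      ((hMeas 1).prodMk ((hMeas 2).prodMk (hMeas 3)))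
  have mY1 : Measurable fun ω => (X 1 ω % 100, X 0 ω, X 2 ω, X 3 ω) :=
    ((measurable_of_countable (fun n : ℕ => n % 100)).comp (hMeas 1)).prodMk
      ((hMeas 0).prodMk ((hMeas 2).prodMk (hMeas 3)))
  have hZ0lt : ∀ ω, X 0 ω / 100 < 10 := fun ω => by have := hVal 0 ω; omega
  have hZ1lt : ∀ ω, X 1 ω / 100 < 10 := fun ω => by have := hVal 1 ω; omega
  have hbase0 := HundredsAux.base (μ := μ) (hMeas 0)
    ((hMeas 1).prodMk ((hMeas 2).prodMk (hMeas 3))) (hVal 0) hprod0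
  have hbase1 := HundredsAux.base (μ := μ) (hMeas 1)
    ((hMeas 0).prodMk ((hMeas 2).prodMk (hMeas 3))) (hVal 1) hprod1
  -- marginal of a1
  have ha1 : ∀ x, x < 10 → μ {ω | X 0 ω / 100 % 10 = x} = 1/10 := by
    intro x hx
    have hs : μ {ω | X 0 ω / 100 = x ∧ True} = 1/10 * μ {ω | True} :=
      HundredsAux.split mZ0 mY0 x (hbase0 x hx) (fun _ => True)
    have e : {ω | X 0 ω / 100 % 10 = x} = {ω | X 0 ω / 100 = x ∧ True} := by
      ext ω
      simp only [Set.mem_setOf_eq, and_true]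
      have := hVal 0 ω
      omega
    rw [e, hs, Set.setOf_true, measure_univ, mul_one]
  -- marginal of e1
  have he1 : ∀ y, y < 10 →
      μ {ω | (X 0 ω + X 1 ω + X 2 ω + X 3 ω) / 100 % 10 = y} = 1/10 := by
    intro y hy
    have key : μ {ω | (X 0 ω / 100 + (X 1 ω / 100 + X 2 ω / 100 + X 3 ω / 100
        + (X 0 ω % 100 + (X 1 ω % 100 + X 2 ω % 100 + X 3 ω % 100)) / 100)) % 10 = y}
        = 1/10 :=
      HundredsAux.unif_shift mZ0 mY0 hZ0lt hbase0
        (fun a => a.2.1 / 100 + a.2.2.1 / 100 + a.2.2.2 / 100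
          + (a.1 + (a.2.1 % 100 + a.2.2.1 % 100 + a.2.2.2 % 100)) / 100) y hy
    have e : {ω | (X 0 ω + X 1 ω + X 2 ω + X 3 ω) / 100 % 10 = y}
        = {ω | (X 0 ω / 100 + (X 1 ω / 100 + X 2 ω / 100 + X 3 ω / 100
          + (X 0 ω % 100 + (X 1 ω % 100 + X 2 ω % 100 + X 3 ω % 100)) / 100)) % 10 = y} := by
      ext ω
      simp only [Set.mem_setOf_eq]
      have h0 := hVal 0 ω; have h1 := hVal 1 ω; have h2 := hVal 2 ω; have h3 := hVal 3 ω
      omega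
    rw [e, key]
  -- joint
  have hjoint : ∀ x y, x < 10 → y < 10 →
      μ {ω | X 0 ω / 100 % 10 = x ∧ (X 0 ω + X 1 ω + X 2 ω + X 3 ω) / 100 % 10 = y}
        = 1/100 := by
    intro x y hx hy
    have hs : μ {ω | X 0 ω / 100 = x ∧ ((x + (X 1 ω / 100 + X 2 ω / 100 + X 3 ω / 100
          + (X 0 ω % 100 + (X 1 ω % 100 + X 2 ω % 100 + X 3 ω % 100)) / 100)) % 10 = y)}
        = 1/10 * μ {ω | (x + (X 1 ω / 100 + X 2 ω / 100 + X 3 ω / 100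
          + (X 0 ω % 100 + (X 1 ω % 100 + X 2 ω % 100 + X 3 ω % 100)) / 100)) % 10 = y} :=
      HundredsAux.split mZ0 mY0 x (hbase0 x hx)
        (fun a => (x + (a.2.1 / 100 + a.2.2.1 / 100 + a.2.2.2 / 100
          + (a.1 + (a.2.1 % 100 + a.2.2.1 % 100 + a.2.2.2 % 100)) / 100)) % 10 = y)
    have keyx : μ {ω | (X 1 ω / 100 + (x + X 2 ω / 100 + X 3 ω / 100
        + (X 1 ω % 100 + (X 0 ω % 100 + X 2 ω % 100 + X 3 ω % 100)) / 100)) % 10 = y}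
        = 1/10 :=
      HundredsAux.unif_shift mZ1 mY1 hZ1lt hbase1
        (fun a => x + a.2.2.1 / 100 + a.2.2.2 / 100
          + (a.1 + (a.2.1 % 100 + a.2.2.1 % 100 + a.2.2.2 % 100)) / 100) y hy
    have e1 : {ω | X 0 ω / 100 % 10 = x ∧ (X 0 ω + X 1 ω + X 2 ω + X 3 ω) / 100 % 10 = y}
        = {ω | X 0 ω / 100 = x ∧ ((x + (X 1 ω / 100 + X 2 ω / 100 + X 3 ω / 100
          + (X 0 ω % 100 + (X 1 ω % 100 + X 2 ω % 100 + X 3 ω % 100)) / 100)) % 10 = y)} := by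
      ext ω
      simp only [Set.mem_setOf_eq]
      have h0 := hVal 0 ω; have h1 := hVal 1 ω; have h2 := hVal 2 ω; have h3 := hVal 3 ω
      omega
    have e2 : {ω | (x + (X 1 ω / 100 + X 2 ω / 100 + X 3 ω / 100
          + (X 0 ω % 100 + (X 1 ω % 100 + X 2 ω % 100 + X 3 ω % 100)) / 100)) % 10 = y}
        = {ω | (X 1 ω / 100 + (x + X 2 ω / 100 + X 3 ω / 100
          + (X 1 ω % 100 + (X 0 ω % 100 + X 2 ω % 100 + X 3 ω % 100)) / 100)) % 10 = y} := by
      ext ω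
      simp only [Set.mem_setOf_eq]
      have h0 := hVal 0 ω; have h1 := hVal 1 ω; have h2 := hVal 2 ω; have h3 := hVal 3 ω
      omega
    rw [e1, hs, e2, keyx]
    simp only [one_div]
    rw [← ENNReal.mul_inv (by norm_num) (by norm_num)]
    norm_num
  -- measurability of the two digit functions
  have mA1 : Measurable fun ω => X 0 ω / 100 % 10 :=
    (measurable_of_countable (fun n : ℕ => n / 100 % 10)).comp (hMeas 0)
  have m4 : Measurable fun ω => (X 0 ω, X 1 ω, X 2 ω, X 3 ω) :=
    (hMeas 0).prodMk ((hMeas 1).prodMk ((hMeas 2).prodMk (hMeas 3)))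
  have mE1 : Measurable fun ω => (X 0 ω + X 1 ω + X 2 ω + X 3 ω) / 100 % 10 :=
    (measurable_of_countable (fun v : ℕ × ℕ × ℕ × ℕ =>
      (v.1 + v.2.1 + v.2.2.1 + v.2.2.2) / 100 % 10)).comp m4
  constructor
  · -- independence
    rw [indepFun_iff_map_prod_eq_prod_map_map mA1.aemeasurable mE1.aemeasurable]
    apply Measure.ext_of_singleton
    rintro ⟨x, y⟩
    rw [← Set.singleton_prod_singleton, Measure.prod_prod,
      Measure.map_apply mA1 (measurableSet_singleton _),
      Measure.map_apply mE1 (measurableSet_singleton _),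
      Set.singleton_prod_singleton,
      Measure.map_apply (mA1.prodMk mE1) (measurableSet_singleton _)]
    have epre : (fun ω => (X 0 ω / 100 % 10, (X 0 ω + X 1 ω + X 2 ω + X 3 ω) / 100 % 10))
        ⁻¹' {(x, y)}
        = {ω | X 0 ω / 100 % 10 = x ∧ (X 0 ω + X 1 ω + X 2 ω + X 3 ω) / 100 % 10 = y} := by
      ext ω
      simp [Prod.ext_iff]
    have ea : (fun ω => X 0 ω / 100 % 10) ⁻¹' {x} = {ω | X 0 ω / 100 % 10 = x} := rfl
    have ee : (fun ω => (X 0 ω + X 1 ω + X 2 ω + X 3 ω) / 100 % 10) ⁻¹' {y}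
        = {ω | (X 0 ω + X 1 ω + X 2 ω + X 3 ω) / 100 % 10 = y} := rfl
    rw [epre, ea, ee]
    by_cases hx : x < 10
    · by_cases hy : y < 10
      · rw [hjoint x y hx hy, ha1 x hx, he1 y hy]
        simp only [one_div]
        rw [← ENNReal.mul_inv (by norm_num) (by norm_num)]
        norm_num
      · have e1 : {ω | (X 0 ω + X 1 ω + X 2 ω + X 3 ω) / 100 % 10 = y} = ∅ := by
          ext ω
          simp only [Set.mem_setOf_eq, Set.mem_empty_iff_false, iff_false]
          omega
        have e2 : {ω | X 0 ω / 100 % 10 = x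
            ∧ (X 0 ω + X 1 ω + X 2 ω + X 3 ω) / 100 % 10 = y} = ∅ := by
          ext ω
          simp only [Set.mem_setOf_eq, Set.mem_empty_iff_false, iff_false, not_and]
          intro _
          omega
        rw [e1, e2, measure_empty, mul_zero]
    · have e1 : {ω | X 0 ω / 100 % 10 = x} = ∅ := by
        ext ω
        simp only [Set.mem_setOf_eq, Set.mem_empty_iff_false, iff_false]
        omega
      have e2 : {ω | X 0 ω / 100 % 10 = x
          ∧ (X 0 ω + X 1 ω + X 2 ω + X 3 ω) / 100 % 10 = y} = ∅ := by
        ext ω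
        simp only [Set.mem_setOf_eq, Set.mem_empty_iff_false, iff_false, not_and]
        intro h
        omega
      rw [e1, e2, measure_empty, zero_mul]
  · -- not conditionally independent given the carry
    intro hall
    have hsMeas : MeasurableSet {ω | (X 0 ω / 100 % 10 + X 1 ω / 100 % 10 + X 2 ω / 100 % 10
        + X 3 ω / 100 % 10
        + (X 0 ω % 100 + X 1 ω % 100 + X 2 ω % 100 + X 3 ω % 100) / 100) / 10 = 0} := by
      have mK : Measurable fun ω => (X 0 ω / 100 % 10 + X 1 ω / 100 % 10 + X 2 ω / 100 % 10
          + X 3 ω / 100 % 10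
          + (X 0 ω % 100 + X 1 ω % 100 + X 2 ω % 100 + X 3 ω % 100) / 100) / 10 :=
        (measurable_of_countable (fun v : ℕ × ℕ × ℕ × ℕ =>
          (v.1 / 100 % 10 + v.2.1 / 100 % 10 + v.2.2.1 / 100 % 10 + v.2.2.2 / 100 % 10
            + (v.1 % 100 + v.2.1 % 100 + v.2.2.1 % 100 + v.2.2.2 % 100) / 100) / 10)).comp m4
      exact mK (measurableSet_singleton 0)
    have h := hall 0 9 0
    rw [cond_apply hsMeas μ, cond_apply hsMeas μ, cond_apply hsMeas μ] at h
    -- the left side vanishes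
    have e0 : {ω | (X 0 ω / 100 % 10 + X 1 ω / 100 % 10 + X 2 ω / 100 % 10 + X 3 ω / 100 % 10
          + (X 0 ω % 100 + X 1 ω % 100 + X 2 ω % 100 + X 3 ω % 100) / 100) / 10 = 0}
        ∩ {ω | X 0 ω / 100 % 10 = 9 ∧ (X 0 ω + X 1 ω + X 2 ω + X 3 ω) / 100 % 10 = 0}
        = ∅ := by
      ext ω
      simp only [Set.mem_inter_iff, Set.mem_setOf_eq, Set.mem_empty_iff_false, iff_false,
        not_and]
      intro hK h9
      have h0 := hVal 0 ω; have h1 := hVal 1 ω; have h2 := hVal 2 ω; have h3 := hVal 3 ω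
      omega
    rw [e0, measure_empty, mul_zero] at h
    -- the two right factors are positive
    have hne4 : (1/1000 : ℝ≥0∞) * ((1/1000) * ((1/1000) * (1/1000))) ≠ 0 := by
      have h1 : (1/1000 : ℝ≥0∞) ≠ 0 := by norm_num
      exact mul_ne_zero h1 (mul_ne_zero h1 (mul_ne_zero h1 h1))
    have hinv : (μ {ω | (X 0 ω / 100 % 10 + X 1 ω / 100 % 10 + X 2 ω / 100 % 10
        + X 3 ω / 100 % 10
        + (X 0 ω % 100 + X 1 ω % 100 + X 2 ω % 100 + X 3 ω % 100) / 100) / 10 = 0})⁻¹ ≠ 0 :=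
      ENNReal.inv_ne_zero.mpr (measure_ne_top μ _)
    have hpt1 : μ {ω | X 0 ω = 900 ∧ (X 1 ω, X 2 ω, X 3 ω) = ((0 : ℕ), (0 : ℕ), (0 : ℕ))}
        = (1/1000 : ℝ≥0∞) * ((1/1000) * ((1/1000) * (1/1000))) := by
      rw [h40]
      norm_num
    have hpt2 : μ {ω | X 0 ω = 0 ∧ (X 1 ω, X 2 ω, X 3 ω) = ((0 : ℕ), (0 : ℕ), (0 : ℕ))}
        = (1/1000 : ℝ≥0∞) * ((1/1000) * ((1/1000) * (1/1000))) := by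
      rw [h40]
      norm_num
    have hn2 : μ ({ω | (X 0 ω / 100 % 10 + X 1 ω / 100 % 10 + X 2 ω / 100 % 10
        + X 3 ω / 100 % 10
        + (X 0 ω % 100 + X 1 ω % 100 + X 2 ω % 100 + X 3 ω % 100) / 100) / 10 = 0}
        ∩ {ω | X 0 ω / 100 % 10 = 9}) ≠ 0 := by
      intro hzero
      apply hne4
      rw [← hpt1]
      refine measure_mono_null ?_ hzero
      rintro ω ⟨hA, hBCD⟩
      simp only [Prod.mk.injEq] at hBCD
      obtain ⟨hB, hC, hD⟩ := hBCD
      constructor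
      · simp only [Set.mem_setOf_eq, hA, hB, hC, hD]
      · simp only [Set.mem_setOf_eq, hA]
    have hn3 : μ ({ω | (X 0 ω / 100 % 10 + X 1 ω / 100 % 10 + X 2 ω / 100 % 10
        + X 3 ω / 100 % 10
        + (X 0 ω % 100 + X 1 ω % 100 + X 2 ω % 100 + X 3 ω % 100) / 100) / 10 = 0}
        ∩ {ω | (X 0 ω + X 1 ω + X 2 ω + X 3 ω) / 100 % 10 = 0}) ≠ 0 := by
      intro hzero
      apply hne4
      rw [← hpt2]
      refine measure_mono_null ?_ hzero
      rintro ω ⟨hA, hBCD⟩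
      simp only [Prod.mk.injEq] at hBCD
      obtain ⟨hB, hC, hD⟩ := hBCD
      constructor
      · simp only [Set.mem_setOf_eq, hA, hB, hC, hD]
      · simp only [Set.mem_setOf_eq, hA, hB, hC, hD]
    exact (mul_ne_zero (mul_ne_zero hinv hn2) (mul_ne_zero hinv hn3)) h.symm
end
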